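/- arXiv:0712.4051 — 5 statements merged into one kernel-verified Lean document; each statement's English description precedes it below -/
import Mathlib

section
/- (Bruhat decomposition for GL_2) Let B be the subgroup of upper triangular invertible 2×2 matrices over F_q and let w = [[0,1],[-1,0]]. Then GL_2(F_q) is the disjoint union of B and BwB. -/
open Matrix

/-- Bruhat decomposition for `GL₂(F_q)`: with `B` the upper triangular invertible
matrices and `w = !![0,1;-1,0]`, the group is the disjoint union of `B` and `BwB`.
An element lies in `B` if and only if it does not lie in `BwB`. -/
theorem bruhat_decomposition_GL2 (F : Type) [Field F] [Fintype F] (g : GL (Fin 2) F) :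
    (g : Matrix (Fin 2) (Fin 2) F) 1 0 = 0 ↔
      ¬ ∃ b₁ b₂ : GL (Fin 2) F,
          (b₁ : Matrix (Fin 2) (Fin 2) F) 1 0 = 0 ∧
          (b₂ : Matrix (Fin 2) (Fin 2) F) 1 0 = 0 ∧
          (g : Matrix (Fin 2) (Fin 2) F) =
            (b₁ : Matrix (Fin 2) (Fin 2) F) * !![(0 : F), 1; -1, 0] *
              (b₂ : Matrix (Fin 2) (Fin 2) F) := by
  constructor
  · rintro h ⟨b₁, b₂, h₁, h₂, heq⟩
    have hd₁ : ((b₁ : Matrix (Fin 2) (Fin 2) F)).det ≠ 0 :=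
      ((Matrix.isUnit_iff_isUnit_det _).mp b₁.isUnit).ne_zero
    have hd₂ : ((b₂ : Matrix (Fin 2) (Fin 2) F)).det ≠ 0 :=
      ((Matrix.isUnit_iff_isUnit_det _).mp b₂.isUnit).ne_zero
    rw [Matrix.det_fin_two, h₁] at hd₁
    rw [Matrix.det_fin_two, h₂] at hd₂
    have hentry : (((b₁ : Matrix (Fin 2) (Fin 2) F) * !![(0 : F), 1; -1, 0] *
        (b₂ : Matrix (Fin 2) (Fin 2) F))) 1 0 =
        -((b₁ : Matrix (Fin 2) (Fin 2) F) 1 1) * (b₂ : Matrix (Fin 2) (Fin 2) F) 0 0 := by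
      simp [Matrix.mul_apply, Fin.sum_univ_two, h₁, h₂]
    rw [heq, hentry] at h
    rcases mul_eq_zero.mp h with h' | h'
    · exact hd₁ (by rw [neg_eq_zero.mp h']; ring)
    · exact hd₂ (by rw [h']; ring)
  · intro h
    by_contra hc
    apply h
    have hdet : ((g : Matrix (Fin 2) (Fin 2) F)).det ≠ 0 :=
      ((Matrix.isUnit_iff_isUnit_det _).mp g.isUnit).ne_zero
    set a := (g : Matrix (Fin 2) (Fin 2) F) 0 0
    set b := (g : Matrix (Fin 2) (Fin 2) F) 0 1
    set c := (g : Matrix (Fin 2) (Fin 2) F) 1 0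
    set d := (g : Matrix (Fin 2) (Fin 2) F) 1 1
    have hc' : c ≠ 0 := hc
    have hdet2 : a * d - b * c ≠ 0 := by rwa [Matrix.det_fin_two] at hdet
    refine ⟨Matrix.GeneralLinearGroup.mkOfDetNeZero !![-(a * d - b * c) / c, a / c; 0, 1] ?_,
      Matrix.GeneralLinearGroup.mkOfDetNeZero !![-c, -d; 0, 1] ?_, rfl, rfl, ?_⟩
    · rw [Matrix.det_fin_two_of]
      field_simp
      intro h'
      exact hdet2 (by have h'' := (div_eq_zero_iff.mp h').resolve_right hc'; linear_combination -h'')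
    · rw [Matrix.det_fin_two_of]
      simpa using hc'
    · show (g : Matrix (Fin 2) (Fin 2) F) = !![-(a * d - b * c) / c, a / c; 0, 1] *
        !![(0 : F), 1; -1, 0] * !![-c, -d; 0, 1]
      ext i j
      fin_cases i <;> fin_cases j <;>
        simp [Matrix.mul_apply, Fin.sum_univ_two] <;> first | rfl | (field_simp; ring) | field_simp
end

section
/- Let G be a finite group, H a normal subgroup, and π an irreducible representation of H. Then the induced representation Ind_H^G π is irreducible if and only if for every x ∉ H, the conjugate representation ˣπ (defined by ˣπ(h) = π(x⁻¹hx)) is not isomorphic to π. -/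
/-- A representation is irreducible: the space is nonzero and the only invariant
submodules are `⊥` and `⊤`. -/
def IsIrrep {G : Type} [Monoid G] {V : Type} [AddCommGroup V] [Module ℂ V]
    (ρ : Representation ℂ G V) : Prop :=
  (∃ v : V, v ≠ 0) ∧
  ∀ W : Submodule ℂ V, (∀ (g : G) (v : V), v ∈ W → ρ g v ∈ W) → W = ⊥ ∨ W = ⊤

/-- The space of the representation induced from `π : H → GL(V)`:
functions `f : G → V` with `f (h * g) = π h (f g)`. -/
def IndSpace (G : Type) [Group G] (H : Subgroup G) (V : Type) [AddCommGroup V]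
    [Module ℂ V] (π : Representation ℂ H V) : Submodule ℂ (G → V) where
  carrier := {f | ∀ (h : H) (g : G), f (↑h * g) = π h (f g)}
  add_mem' := by
    intro a b ha hb h g
    simp only [Pi.add_apply, ha h g, hb h g, map_add]
  zero_mem' := by
    intro h g
    simp
  smul_mem' := by
    intro c a ha h g
    simp [ha h g]

/-- The induced representation `Ind_H^G π`, acting by right translation. -/
def IndRep (G : Type) [Group G] (H : Subgroup G) (V : Type) [AddCommGroup V]
    [Module ℂ V] (π : Representation ℂ H V) :
    Representation ℂ G (IndSpace G H V π) where
  toFun g :=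
    { toFun := fun f => ⟨fun x => (f : G → V) (x * g), fun h x => by
        show (f : G → V) (↑h * x * g) = π h ((f : G → V) (x * g))
        rw [mul_assoc]; exact f.2 h (x * g)⟩
      map_add' := fun a b => by ext x; rfl
      map_smul' := fun c a => by ext x; rfl }
  map_one' := by
    apply LinearMap.ext; intro f; apply Subtype.ext; funext x; simp
  map_mul' := fun g₁ g₂ => by
    apply LinearMap.ext; intro f; apply Subtype.ext; funext x
    simp [mul_assoc]

/-- The homomorphism `h ↦ x⁻¹ h x` of a normal subgroup. -/
def conjHom {G : Type} [Group G] (H : Subgroup G) (hH : H.Normal) (x : G) :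
    H →* H where
  toFun h := ⟨x⁻¹ * ↑h * x, by simpa using hH.conj_mem _ h.2 x⁻¹⟩
  map_one' := by ext; simp
  map_mul' := fun a b => by
    ext
    simp only [Subgroup.coe_mul, MulMemClass.mk_mul_mk]
    group

section Aux

variable {G : Type} [Group G] {H : Subgroup G} {V : Type} [AddCommGroup V] [Module ℂ V]
  {π : Representation ℂ H V}

lemma indSpace_spec (f : IndSpace G H V π) (h : H) (g : G) :
    f.1 (↑h * g) = π h (f.1 g) := f.2 h g

lemma indRep_apply (g : G) (f : IndSpace G H V π) (y : G) :
    ((IndRep G H V π g) f).1 y = f.1 (y * g) := rfl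

open Classical in
/-- indicator section supported on the coset `H * x`. -/
noncomputable def delta (π : Representation ℂ H V) (x : G) (v : V) :
    IndSpace G H V π :=
  ⟨fun y => if hy : y * x⁻¹ ∈ H then π ⟨y * x⁻¹, hy⟩ v else 0, by
    intro h g
    show (if hy : (↑h * g) * x⁻¹ ∈ H then π ⟨(↑h * g) * x⁻¹, hy⟩ v else 0)
        = π h (if hy : g * x⁻¹ ∈ H then π ⟨g * x⁻¹, hy⟩ v else 0)
    by_cases hg : g * x⁻¹ ∈ H
    · have h1 : ↑h * g * x⁻¹ ∈ H := by
        rw [mul_assoc]; exact H.mul_mem h.2 hg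
      rw [dif_pos h1, dif_pos hg]
      have h2 : (⟨↑h * g * x⁻¹, h1⟩ : H) = h * ⟨g * x⁻¹, hg⟩ := by
        ext; simp [mul_assoc]
      rw [h2, map_mul]
      rfl
    · have h1 : ¬ (↑h * g * x⁻¹ ∈ H) := fun hc => hg (by
        have he : g * x⁻¹ = (↑h)⁻¹ * (↑h * g * x⁻¹) := by group
        rw [he]; exact H.mul_mem (H.inv_mem h.2) hc)
      rw [dif_neg h1, dif_neg hg, map_zero]⟩

open Classical in
lemma delta_apply (x : G) (v : V) (y : G) :
    (delta π x v).1 y = if hy : y * x⁻¹ ∈ H then π ⟨y * x⁻¹, hy⟩ v else 0 := rfl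

lemma delta_apply_self (x : G) (v : V) : (delta π x v).1 x = v := by
  rw [delta_apply, dif_pos (by simpa using H.one_mem : x * x⁻¹ ∈ H)]
  have : (⟨x * x⁻¹, by simpa using H.one_mem⟩ : H) = 1 := by ext; simp
  rw [this, map_one]
  rfl

lemma delta_apply_of_not_mem (x : G) (v : V) (y : G) (hy : ¬ y * x⁻¹ ∈ H) :
    (delta π x v).1 y = 0 := by rw [delta_apply, dif_neg hy]

lemma indRep_delta (g x : G) (v : V) :
    (IndRep G H V π g) (delta π x v) = delta π (x * g⁻¹) v := by
  apply Subtype.ext; funext y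
  show (delta π x v).1 (y * g) = (delta π (x * g⁻¹) v).1 y
  have hc : y * (x * g⁻¹)⁻¹ = y * g * x⁻¹ := by group
  simp only [delta_apply]
  by_cases hy : y * g * x⁻¹ ∈ H
  · rw [dif_pos hy, dif_pos (show y * (x * g⁻¹)⁻¹ ∈ H from hc ▸ hy)]
    have h2 : (⟨y * (x * g⁻¹)⁻¹, hc ▸ hy⟩ : H) = ⟨y * g * x⁻¹, hy⟩ := by ext; exact hc
    rw [h2]
  · rw [dif_neg hy, dif_neg (show ¬ y * (x * g⁻¹)⁻¹ ∈ H from fun hk => hy (hc ▸ hk))]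

lemma delta_eq_rep (g : G) (v : V) :
    delta π g v = (IndRep G H V π g⁻¹) (delta π 1 v) := by
  rw [indRep_delta]; simp

lemma delta_add (x : G) (v w : V) :
    delta π x (v + w) = delta π x v + delta π x w := by
  apply Subtype.ext; funext y
  show (delta π x (v + w)).1 y = (delta π x v).1 y + (delta π x w).1 y
  rw [delta_apply, delta_apply, delta_apply]
  by_cases hy : y * x⁻¹ ∈ H
  · rw [dif_pos hy, dif_pos hy, dif_pos hy, map_add]
  · rw [dif_neg hy, dif_neg hy, dif_neg hy, add_zero]

lemma delta_smul (x : G) (c : ℂ) (v : V) :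
    delta π x (c • v) = c • delta π x v := by
  apply Subtype.ext; funext y
  show (delta π x (c • v)).1 y = c • (delta π x v).1 y
  rw [delta_apply, delta_apply]
  by_cases hy : y * x⁻¹ ∈ H
  · rw [dif_pos hy, dif_pos hy, map_smul]
  · rw [dif_neg hy, dif_neg hy, smul_zero]

lemma delta_pi (h : H) (x : G) (v : V) :
    delta π ((↑h)⁻¹ * x) v = delta π x (π h v) := by
  apply Subtype.ext; funext y
  rw [delta_apply, delta_apply]
  have hc : y * ((↑h)⁻¹ * x)⁻¹ = y * x⁻¹ * ↑h := by group
  by_cases hy : y * x⁻¹ ∈ H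
  · have h1 : y * ((↑h)⁻¹ * x)⁻¹ ∈ H := by rw [hc]; exact H.mul_mem hy h.2
    rw [dif_pos h1, dif_pos hy]
    have h2 : (⟨y * ((↑h)⁻¹ * x)⁻¹, h1⟩ : H) = ⟨y * x⁻¹, hy⟩ * h := by
      ext; simp [hc, mul_assoc]
    rw [h2, map_mul]; rfl
  · have h1 : ¬ y * ((↑h)⁻¹ * x)⁻¹ ∈ H := fun hcc => hy (by
      have he : y * x⁻¹ = (y * ((↑h)⁻¹ * x)⁻¹) * (↑h)⁻¹ := by group
      rw [he]; exact H.mul_mem hcc (H.inv_mem h.2))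
    rw [dif_neg h1, dif_neg hy]

theorem schur_scalar {G : Type} [Monoid G] {V : Type} [AddCommGroup V] [Module ℂ V]
    [FiniteDimensional ℂ V] {ρ : Representation ℂ G V} (hρ : IsIrrep ρ)
    (T : V →ₗ[ℂ] V) (hT : ∀ (g : G) (v : V), T (ρ g v) = ρ g (T v)) :
    ∃ μ : ℂ, ∀ v, T v = μ • v := by
  obtain ⟨v₀, hv₀⟩ := hρ.1
  have : Nontrivial V := ⟨v₀, 0, hv₀⟩
  obtain ⟨μ, hμ⟩ := Module.End.exists_eigenvalue (T : Module.End ℂ V)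
  refine ⟨μ, ?_⟩
  set K := LinearMap.ker (T - μ • LinearMap.id (R := ℂ) (M := V)) with hK
  have hmem : ∀ v, v ∈ K ↔ T v = μ • v := by
    intro v
    simp [hK, LinearMap.mem_ker, sub_eq_zero]
  have hinv : ∀ (g : G) (v : V), v ∈ K → ρ g v ∈ K := by
    intro g v hv
    rw [hmem] at hv ⊢
    rw [hT, hv, map_smul]
  rcases hρ.2 K hinv with hbot | htop
  · exfalso
    obtain ⟨w, hw⟩ := hμ.exists_hasEigenvector
    have : w ∈ K := by
      rw [hmem]
      exact hw.apply_eq_smul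
    rw [hbot] at this
    exact hw.2 (by simpa using this)
  · intro v
    have : v ∈ K := htop ▸ Submodule.mem_top
    exact (hmem v).1 this

end Aux

/-- Mackey's irreducibility criterion for a normal subgroup: for `H ⊴ G` and `π`
an irreducible representation of `H`, the induced representation `π^G` is
irreducible iff for every `x ∉ H` the conjugate representation `ˣπ`
(given by `h ↦ π (x⁻¹ h x)`) is not isomorphic to `π`. -/
theorem induced_irreducible_iff (G : Type) [Group G] [Finite G] (H : Subgroup G)
    (hH : H.Normal) (V : Type) [AddCommGroup V] [Module ℂ V]
    [FiniteDimensional ℂ V] (π : Representation ℂ H V) (hπ : IsIrrep π) :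
    IsIrrep (IndRep G H V π) ↔
      ∀ x : G, x ∉ H →
        ¬ ∃ e : V ≃ₗ[ℂ] V, ∀ (h : H) (v : V),
            e (π (conjHom H hH x h) v) = π h (e v) := by
  letI : Fintype G := Fintype.ofFinite G
  letI : Fintype ↥H := Fintype.ofFinite ↥H
  classical
  constructor
  · -- forward direction
    intro hirr x hx hex
    obtain ⟨e, he⟩ := hex
    have hmem : ∀ f : IndSpace G H V π,
        (fun y => e (f.1 (x⁻¹ * y))) ∈ IndSpace G H V π := by
      intro f h g
      show e (f.1 (x⁻¹ * (↑h * g))) = π h (e (f.1 (x⁻¹ * g)))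
      have h1 : x⁻¹ * (↑h * g) = ↑(conjHom H hH x h) * (x⁻¹ * g) := by
        show _ = (x⁻¹ * ↑h * x) * (x⁻¹ * g)
        group
      rw [h1, indSpace_spec, he]
    set T : IndSpace G H V π →ₗ[ℂ] IndSpace G H V π :=
      { toFun := fun f => ⟨fun y => e (f.1 (x⁻¹ * y)), hmem f⟩
        map_add' := fun a b => by
          apply Subtype.ext; funext y
          show e ((a + b).1 (x⁻¹ * y)) = e (a.1 (x⁻¹ * y)) + e (b.1 (x⁻¹ * y))
          have : (a + b).1 (x⁻¹ * y) = a.1 (x⁻¹ * y) + b.1 (x⁻¹ * y) := rfl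
          rw [this, map_add]
        map_smul' := fun c a => by
          apply Subtype.ext; funext y
          show e ((c • a).1 (x⁻¹ * y)) = c • e (a.1 (x⁻¹ * y))
          have : (c • a).1 (x⁻¹ * y) = c • a.1 (x⁻¹ * y) := rfl
          rw [this, map_smul] } with hT
    have hTeq : ∀ (g : G) (f : IndSpace G H V π),
        T ((IndRep G H V π) g f) = (IndRep G H V π) g (T f) := by
      intro g f
      apply Subtype.ext; funext y
      show e (((IndRep G H V π) g f).1 (x⁻¹ * y)) = (T f).1 (y * g)
      rw [indRep_apply]
      show e (f.1 (x⁻¹ * y * g)) = e (f.1 (x⁻¹ * (y * g)))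
      rw [mul_assoc]
    obtain ⟨μ, hμ⟩ := schur_scalar hirr T hTeq
    obtain ⟨v, hv⟩ := hπ.1
    have h1 := congrArg (fun z : IndSpace G H V π => z.1 x) (hμ (delta π 1 v))
    have hL : (T (delta π 1 v)).1 x = e v := by
      show e ((delta π 1 v).1 (x⁻¹ * x)) = e v
      rw [inv_mul_cancel]
      rw [show (delta π 1 v).1 1 = v from delta_apply_self 1 v]
    have hR : (μ • delta π 1 v).1 x = 0 := by
      show μ • (delta π 1 v).1 x = 0
      rw [delta_apply_of_not_mem _ _ _ (by simpa using hx), smul_zero]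
    rw [hL, hR] at h1
    exact hv ((LinearEquiv.map_eq_zero_iff e).mp h1)
  · -- backward direction
    intro hcond
    constructor
    · obtain ⟨v, hv⟩ := hπ.1
      refine ⟨delta π 1 v, fun hz => hv ?_⟩
      have h1 := congrArg (fun z : IndSpace G H V π => z.1 1) hz
      simpa [delta_apply_self] using h1
    · intro W hW
      by_contra hcon
      push_neg at hcon
      obtain ⟨hWbot, hWtop⟩ := hcon
      obtain ⟨U, hU⟩ := Submodule.exists_isCompl W
      set p : IndSpace G H V π →ₗ[ℂ] IndSpace G H V π :=
        W.subtype ∘ₗ Submodule.linearProjOfIsCompl W U hU with hp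
      set T : IndSpace G H V π →ₗ[ℂ] IndSpace G H V π :=
        (Fintype.card G : ℂ)⁻¹ •
          ∑ g : G, ((IndRep G H V π) g⁻¹) ∘ₗ p ∘ₗ ((IndRep G H V π) g) with hTdef
      have hcardG : (Fintype.card G : ℂ) ≠ 0 :=
        Nat.cast_ne_zero.mpr Fintype.card_ne_zero
      have hTapp : ∀ f, T f = (Fintype.card G : ℂ)⁻¹ •
          ∑ g : G, (IndRep G H V π) g⁻¹
            (p ((IndRep G H V π) g f)) := by
        intro f
        rw [hTdef]
        simp [LinearMap.sum_apply]
      have hpmem : ∀ f, p f ∈ W := by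
        intro f
        rw [hp]
        exact Submodule.coe_mem _
      have hpfix : ∀ w, w ∈ W → p w = w := by
        intro w hw
        rw [hp]
        simp only [LinearMap.comp_apply]
        have : Submodule.linearProjOfIsCompl W U hU w
            = ⟨w, hw⟩ := by
          conv_lhs => rw [show w = ↑(⟨w, hw⟩ : W) from rfl]
          exact Submodule.linearProjOfIsCompl_apply_left hU ⟨w, hw⟩
        rw [this]
        rfl
      have hTmem : ∀ f, T f ∈ W := by
        intro f
        rw [hTapp]
        apply Submodule.smul_mem
        apply Submodule.sum_mem
        intro g _
        exact hW g⁻¹ _ (hpmem _)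
      have hcancel : ∀ (a : G) (z : IndSpace G H V π),
          (IndRep G H V π) a⁻¹ ((IndRep G H V π) a z) = z := by
        intro a z
        rw [← Module.End.mul_apply, ← map_mul, inv_mul_cancel, map_one,
          Module.End.one_apply]
      have hTfix : ∀ w, w ∈ W → T w = w := by
        intro w hw
        rw [hTapp]
        have h1 : ∀ g : G, (IndRep G H V π) g⁻¹ (p ((IndRep G H V π) g w))
            = w := by
          intro g
          rw [hpfix _ (hW g w hw), hcancel]
        rw [Finset.sum_congr rfl (fun g _ => h1 g), Finset.sum_const,
          Finset.card_univ, ← Nat.cast_smul_eq_nsmul ℂ, inv_smul_smul₀ hcardG]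
      have hTequiv : ∀ (g₀ : G) (f : IndSpace G H V π),
          T ((IndRep G H V π) g₀ f) = (IndRep G H V π) g₀ (T f) := by
        intro g₀ f
        rw [hTapp, hTapp, map_smul]
        congr 1
        rw [map_sum]
        refine (Fintype.sum_equiv (Equiv.mulRight g₀⁻¹)
          (fun k => (IndRep G H V π) g₀
            ((IndRep G H V π) k⁻¹ (p ((IndRep G H V π) k f))))
          (fun k => (IndRep G H V π) k⁻¹
            (p ((IndRep G H V π) k ((IndRep G H V π) g₀ f)))) ?_).symm
        intro k
        show (IndRep G H V π) g₀ ((IndRep G H V π) k⁻¹ (p ((IndRep G H V π) k f)))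
          = (IndRep G H V π) (k * g₀⁻¹)⁻¹
            (p ((IndRep G H V π) (k * g₀⁻¹) ((IndRep G H V π) g₀ f)))
        have e1 : (IndRep G H V π) (k * g₀⁻¹) ((IndRep G H V π) g₀ f)
            = (IndRep G H V π) k f := by
          rw [← Module.End.mul_apply, ← map_mul]
          simp [mul_assoc]
        have e2 : ∀ z, (IndRep G H V π) (k * g₀⁻¹)⁻¹ z
            = (IndRep G H V π) g₀ ((IndRep G H V π) k⁻¹ z) := by
          intro z
          rw [← Module.End.mul_apply, ← map_mul]
          congr 1
          group
        rw [e1, e2]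

      set φ : G → V →ₗ[ℂ] V := fun z =>
        { toFun := fun v => (T (delta π 1 v)).1 z
          map_add' := fun a b => by
            show (T (delta π 1 (a + b))).1 z
              = (T (delta π 1 a)).1 z + (T (delta π 1 b)).1 z
            rw [delta_add, map_add]; rfl
          map_smul' := fun c a => by
            show (T (delta π 1 (c • a))).1 z = c • (T (delta π 1 a)).1 z
            rw [delta_smul, map_smul]; rfl } with hφdef
      have hφ : ∀ (z : G) (h : H) (hz : z * ↑h * z⁻¹ ∈ H) (v : V),
          φ z (π h v) = π ⟨z * ↑h * z⁻¹, hz⟩ (φ z v) := by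
        intro z h hz v
        show (T (delta π 1 (π h v))).1 z
          = π ⟨z * ↑h * z⁻¹, hz⟩ ((T (delta π 1 v)).1 z)
        have h1 : delta π 1 (π h v) = (IndRep G H V π) ↑h (delta π 1 v) := by
          rw [indRep_delta, one_mul, ← delta_pi, mul_one]
        rw [h1, hTequiv, indRep_apply]
        have h2 : z * ↑h = ↑(⟨z * ↑h * z⁻¹, hz⟩ : H) * z := by
          show z * ↑h = z * ↑h * z⁻¹ * z
          group
        conv_lhs => rw [h2]
        exact indSpace_spec _ _ _
      by_cases hall : ∀ z : G, z ∉ H → φ z = 0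
      · -- all twisted components vanish: T is scalar, contradiction
        have hcomm : ∀ (h : H) (v : V), (φ 1) (π h v) = π h ((φ 1) v) := by
          intro h v
          have hz : (1 : G) * ↑h * (1 : G)⁻¹ ∈ H := by simpa using h.2
          rw [hφ 1 h hz]
          congr 1
          ext
          simp
        obtain ⟨μ, hμ⟩ := schur_scalar hπ (φ 1) hcomm
        have hTdelta : ∀ v : V, T (delta π 1 v) = μ • delta π 1 v := by
          intro v
          apply Subtype.ext; funext y
          show (T (delta π 1 v)).1 y = (μ • delta π 1 v).1 y
          have hR : (μ • delta π 1 v).1 y = μ • (delta π 1 v).1 y := rfl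
          by_cases hy : y ∈ H
          · have h1 : (T (delta π 1 v)).1 y
                = π ⟨y, hy⟩ ((T (delta π 1 v)).1 1) := by
              conv_lhs => rw [show y = ↑(⟨y, hy⟩ : H) * 1 by simp]
              exact indSpace_spec _ ⟨y, hy⟩ 1
            have h2 : (T (delta π 1 v)).1 1 = μ • v := hμ v
            rw [h1, h2, hR, delta_apply,
              dif_pos (show y * (1 : G)⁻¹ ∈ H by simpa using hy), map_smul]
            have h3 : (⟨y * (1 : G)⁻¹, by simpa using hy⟩ : H) = ⟨y, hy⟩ := by
              ext; simp
            rw [h3]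
          · have h0 : (T (delta π 1 v)).1 y = 0 := by
              exact LinearMap.congr_fun (hall y hy) v
            rw [h0, hR, delta_apply_of_not_mem _ _ _ (by simpa using hy),
              smul_zero]
        have hcardH : (Fintype.card ↥H : ℂ) ≠ 0 :=
          Nat.cast_ne_zero.mpr Fintype.card_ne_zero
        have hsum : ∀ f : IndSpace G H V π,
            ∑ g : G, delta π g (f.1 g) = (Fintype.card ↥H : ℂ) • f := by
          intro f
          apply Subtype.ext
          have hcoe : (↑(∑ g : G, delta π g (f.1 g)) : G → V)
              = ∑ g : G, ((delta π g (f.1 g) : G → V)) := by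
            push_cast
            rfl
          rw [hcoe]
          funext y
          rw [Finset.sum_apply]
          have hterm : ∀ g : G, (delta π g (f.1 g)).1 y
              = if y * g⁻¹ ∈ H then f.1 y else 0 := by
            intro g
            rw [delta_apply]
            by_cases hg : y * g⁻¹ ∈ H
            · rw [dif_pos hg, if_pos hg]
              have h4 : ↑((⟨y * g⁻¹, hg⟩ : H)⁻¹) * y = g := by
                show (y * g⁻¹)⁻¹ * y = g
                group
              have h5 := indSpace_spec f (⟨y * g⁻¹, hg⟩ : H)⁻¹ y
              rw [h4] at h5
              rw [h5, ← Module.End.mul_apply, ← map_mul]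
              simp
            · rw [dif_neg hg, if_neg hg]
          rw [Finset.sum_congr rfl (fun g _ => hterm g), ← Finset.sum_filter,
            Finset.sum_const]
          have hcard : (Finset.univ.filter (fun g : G => y * g⁻¹ ∈ H)).card
              = Fintype.card ↥H := by
            rw [← Fintype.card_subtype]
            refine Fintype.card_congr
              ⟨fun g => ⟨y * g.1⁻¹, g.2⟩,
               fun h => ⟨(↑h)⁻¹ * y, by
                 have hc : y * ((↑h)⁻¹ * y)⁻¹ = ↑h := by group
                 rw [hc]; exact h.2⟩, ?_, ?_⟩
            · intro g
              apply Subtype.ext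
              show (y * g.1⁻¹)⁻¹ * y = g.1
              group
            · intro h
              apply Subtype.ext
              show y * ((↑h)⁻¹ * y)⁻¹ = ↑h
              group
          rw [hcard]
          show (Fintype.card ↥H) • f.1 y = ((Fintype.card ↥H : ℂ) • f).1 y
          rw [show ((Fintype.card ↥H : ℂ) • f).1 y
            = (Fintype.card ↥H : ℂ) • f.1 y from rfl, Nat.cast_smul_eq_nsmul]
        have hTall : ∀ f, T f = μ • f := by
          intro f
          have h1 := congrArg T (hsum f)
          rw [map_sum, map_smul] at h1
          have h2 : ∀ g : G, T (delta π g (f.1 g))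
              = μ • delta π g (f.1 g) := by
            intro g
            rw [delta_eq_rep, hTequiv, hTdelta, map_smul, ← delta_eq_rep]
          rw [Finset.sum_congr rfl (fun g _ => h2 g), ← Finset.smul_sum,
            hsum f, smul_comm] at h1
          exact (smul_right_injective _ hcardH h1).symm
        obtain ⟨w, hwW, hw0⟩ := (Submodule.ne_bot_iff W).mp hWbot
        have hμ1 : μ = 1 := by
          have h1 : μ • w = w := by rw [← hTall w]; exact hTfix w hwW
          refine smul_left_injective ℂ hw0 ?_
          show μ • w = (1 : ℂ) • w
          rw [h1, one_smul]
        obtain ⟨u, hu⟩ : ∃ u : IndSpace G H V π, u ∉ W := by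
          by_contra hc
          push_neg at hc
          exact hWtop (Submodule.eq_top_iff'.mpr hc)
        apply hu
        have h1 : T u = u := by rw [hTall u, hμ1, one_smul]
        rw [← h1]
        exact hTmem u
      · -- some twisted component survives: build the intertwiner
        push_neg at hall
        obtain ⟨x, hx, hφx⟩ := hall
        exfalso
        apply hcond x hx
        have hkerinv : ∀ (h : H) (v : V), v ∈ LinearMap.ker (φ x) →
            π h v ∈ LinearMap.ker (φ x) := by
          intro h v hv
          rw [LinearMap.mem_ker] at hv ⊢
          have hz : x * ↑h * x⁻¹ ∈ H := hH.conj_mem ↑h h.2 x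
          rw [hφ x h hz, hv, map_zero]
        have hker : LinearMap.ker (φ x) = ⊥ := by
          rcases hπ.2 (LinearMap.ker (φ x)) hkerinv with h | h
          · exact h
          · exfalso
            apply hφx
            apply LinearMap.ext
            intro v
            have : v ∈ LinearMap.ker (φ x) := h ▸ Submodule.mem_top
            simpa using this
        have hrangeinv : ∀ (h : H) (v : V), v ∈ LinearMap.range (φ x) →
            π h v ∈ LinearMap.range (φ x) := by
          intro h v hv
          obtain ⟨u, hu⟩ := LinearMap.mem_range.mp hv
          rw [LinearMap.mem_range]
          refine ⟨π (conjHom H hH x h) u, ?_⟩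
          have hz : x * ↑(conjHom H hH x h) * x⁻¹ ∈ H := by
            have hcoe : x * ↑(conjHom H hH x h) * x⁻¹ = ↑h := by
              show x * (x⁻¹ * ↑h * x) * x⁻¹ = ↑h
              group
            rw [hcoe]
            exact h.2
          rw [hφ x (conjHom H hH x h) hz u]
          have he : (⟨x * ↑(conjHom H hH x h) * x⁻¹, hz⟩ : H) = h := by
            ext
            show x * (x⁻¹ * ↑h * x) * x⁻¹ = ↑h
            group
          rw [he, hu]
        have hrange : LinearMap.range (φ x) = ⊤ := by
          rcases hπ.2 (LinearMap.range (φ x)) hrangeinv with h | h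
          · exact absurd (LinearMap.range_eq_bot.mp h) hφx
          · exact h
        refine ⟨LinearEquiv.ofBijective (φ x)
          ⟨LinearMap.ker_eq_bot.mp hker, LinearMap.range_eq_top.mp hrange⟩, ?_⟩
        intro h v
        show φ x (π (conjHom H hH x h) v) = π h (φ x v)
        have hz : x * ↑(conjHom H hH x h) * x⁻¹ ∈ H := by
          have hcoe : x * ↑(conjHom H hH x h) * x⁻¹ = ↑h := by
            show x * (x⁻¹ * ↑h * x) * x⁻¹ = ↑h
            group
          rw [hcoe]
          exact h.2
        rw [hφ x (conjHom H hH x h) hz v]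
        have he : (⟨x * ↑(conjHom H hH x h) * x⁻¹, hz⟩ : H) = h := by
          ext
          show x * (x⁻¹ * ↑h * x) * x⁻¹ = ↑h
          group
        rw [he]
end

section
/- Let G be a finite group, N an abelian normal subgroup, ρ an irreducible representation of G, χ a character of N with V_χ ≠ 0, and G_χ the stabilizer of χ in G. Then ρ is isomorphic to the representation of G induced from the representation of G_χ on V_χ. -/
lemma sum_units_char_eq_zero {N : Type} [Group N] [Fintype N] (ψ : N →* ℂˣ)
    (m : N) (hm : ψ m ≠ 1) : ∑ n : N, (ψ n : ℂ) = 0 := by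
  have h : ∑ n : N, ((ψ (m * n) : ℂˣ) : ℂ) = ∑ n : N, (ψ n : ℂ) :=
    Fintype.sum_equiv (Equiv.mulLeft m) _ _ (fun n => rfl)
  have h2 : ∑ n : N, ((ψ (m * n) : ℂˣ) : ℂ) = (ψ m : ℂ) * ∑ n : N, (ψ n : ℂ) := by
    rw [Finset.mul_sum]
    exact Finset.sum_congr rfl fun n _ => by rw [map_mul]; push_cast; ring
  have h3 : ((ψ m : ℂ) - 1) * ∑ n : N, (ψ n : ℂ) = 0 := by
    rw [sub_mul, one_mul, ← h2, h]; ring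
  rcases mul_eq_zero.mp h3 with h4 | h4
  · refine absurd (Units.ext ?_) hm
    show ((ψ m : ℂˣ) : ℂ) = ((1 : ℂˣ) : ℂ)
    rw [sub_eq_zero] at h4; simpa using h4
  · exact h4

def cchar {G : Type} [Group G] {N : Subgroup G} (hN : N.Normal) (χ : N →* ℂˣ)
    (x : G) : N →* ℂˣ where
  toFun n := χ ⟨x * ↑n * x⁻¹, hN.conj_mem ↑n n.2 x⟩
  map_one' := by
    show χ ⟨x * ((1 : N) : G) * x⁻¹, hN.conj_mem _ (1:N).2 x⟩ = 1
    have : (⟨x * ((1 : N) : G) * x⁻¹, hN.conj_mem _ (1:N).2 x⟩ : N) = 1 :=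
      Subtype.ext (by simp)
    rw [this, map_one]
  map_mul' a b := by
    show χ _ = χ _ * χ _
    rw [← map_mul]
    congr 1
    refine Subtype.ext ?_
    push_cast
    group

/-- Mackey's imprimitivity theorem: with `N ⊴ G` abelian, `ρ` irreducible, `χ` a
character of `N` with nonzero eigenspace `V_χ`, `G_χ` the stabilizer of `χ`, and
`ρ_χ` the representation of `G_χ` on `V_χ` obtained by restricting `ρ`, the
representation `ρ` is isomorphic to `Ind_{G_χ}^G ρ_χ`. -/
theorem mackey_imprimitivity (G : Type) [Group G] [Finite G] (N : Subgroup G)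
    (hN : N.Normal) (hab : ∀ a b : N, a * b = b * a) (V : Type) [AddCommGroup V]
    [Module ℂ V] [FiniteDimensional ℂ V] (ρ : Representation ℂ G V)
    (hirr : IsIrrep ρ) (χ : N →* ℂˣ)
    (Vχ : Submodule ℂ V)
    (hVχ : ∀ v : V, v ∈ Vχ ↔ ∀ n : N, ρ ↑n v = (χ n : ℂ) • v)
    (hne : Vχ ≠ ⊥)
    (Gχ : Subgroup G)
    (hGχ : ∀ g : G, g ∈ Gχ ↔ ∀ n : N,
        χ ⟨g⁻¹ * ↑n * g, by simpa using hN.conj_mem _ n.2 g⁻¹⟩ = χ n)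
    (ρχ : Representation ℂ Gχ Vχ)
    (hρχ : ∀ (g : Gχ) (v : Vχ), (ρχ g v : V) = ρ ↑g ↑v) :
    ∃ e : V ≃ₗ[ℂ] IndSpace G Gχ Vχ ρχ,
      ∀ (g : G) (v : V), e (ρ g v) = IndRep G Gχ Vχ ρχ g (e v) := by
  classical
  haveI : Fintype G := Fintype.ofFinite G
  haveI : Fintype N := Fintype.ofFinite N
  -- basic helpers
  have chiext : ∀ (a b : N), (a : G) = (b : G) → χ a = χ b :=
    fun a b h => congrArg χ (Subtype.ext h)
  have rmul : ∀ (a b : G) (w : V), ρ a (ρ b w) = ρ (a * b) w := by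
    intro a b w; rw [map_mul]; rfl
  have rcancel : ∀ (a : G) (w : V), ρ a⁻¹ (ρ a w) = w := by
    intro a w; rw [rmul, inv_mul_cancel, map_one]; rfl
  have rcancel' : ∀ (a : G) (w : V), ρ a (ρ a⁻¹ w) = w := by
    intro a w; rw [rmul, mul_inv_cancel, map_one]; rfl
  -- the intertwiner Φ : Ind → V
  let Φ : IndSpace G Gχ Vχ ρχ →ₗ[ℂ] V :=
    { toFun := fun f => ∑ x : G, ρ x⁻¹ (((f : G → Vχ) x : V))
      map_add' := by
        intro a b
        simp [Finset.sum_add_distrib]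
      map_smul' := by
        intro c a
        simp [Finset.smul_sum] }
  have Φapp : ∀ f, Φ f = ∑ x : G, ρ x⁻¹ (((f : G → Vχ) x : V)) := fun f => rfl
  -- equivariance
  have hequiv : ∀ (a : G) (f : IndSpace G Gχ Vχ ρχ),
      Φ (IndRep G Gχ Vχ ρχ a f) = ρ a (Φ f) := by
    intro a f
    have h1 : Φ (IndRep G Gχ Vχ ρχ a f)
        = ∑ x : G, ρ x⁻¹ (((f : G → Vχ) (x * a) : V)) := rfl
    rw [h1, Φapp, map_sum]
    refine Fintype.sum_equiv (Equiv.mulRight a) _ _ ?_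
    intro x
    show ρ x⁻¹ (((f : G → Vχ) (x * a) : V)) = ρ a (ρ (x * a)⁻¹ (((f : G → Vχ) (x * a) : V)))
    rw [rmul]
    congr 1
    group
  -- eigenvalue property
  have eig : ∀ (x : G) (w : V), w ∈ Vχ → ∀ n : N,
      ρ ↑n (ρ x⁻¹ w) = (cchar hN χ x n : ℂ) • ρ x⁻¹ w := by
    intro x w hw n
    have h1 : (↑n : G) * x⁻¹ = x⁻¹ * (x * ↑n * x⁻¹) := by group
    rw [rmul, h1, ← rmul, (hVχ w).mp hw ⟨x * ↑n * x⁻¹, hN.conj_mem ↑n n.2 x⟩, map_smul]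
    rfl

  -- relation between conjugate characters and the stabilizer
  have claimA : ∀ g x : G, g * x⁻¹ ∈ Gχ → ∀ n : N, cchar hN χ x n = cchar hN χ g n := by
    intro g x hx n
    have hx' := (hGχ (g * x⁻¹)).mp hx
    have h1 := hx' ⟨g * ↑n * g⁻¹, hN.conj_mem ↑n n.2 g⟩
    -- h1 : χ ⟨(g*x⁻¹)⁻¹ * (g n g⁻¹) * (g*x⁻¹), _⟩ = χ ⟨g n g⁻¹, _⟩
    have h2 : χ (⟨x * ↑n * x⁻¹, hN.conj_mem ↑n n.2 x⟩ : N)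
        = χ (⟨(g * x⁻¹)⁻¹ * (g * ↑n * g⁻¹) * (g * x⁻¹), by simpa using hN.conj_mem _ (hN.conj_mem ↑n n.2 g) (g*x⁻¹)⁻¹⟩ : N) := by
      refine chiext _ _ ?_
      show x * ↑n * x⁻¹ = (g * x⁻¹)⁻¹ * (g * ↑n * g⁻¹) * (g * x⁻¹)
      group
    show χ _ = χ _
    rw [h2, h1]
  have claimB : ∀ g x : G, g * x⁻¹ ∉ Gχ → ∃ n : N, cchar hN χ x n ≠ cchar hN χ g n := by
    intro g x hx
    by_contra hcon
    push_neg at hcon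
    apply hx
    rw [hGχ (g * x⁻¹)]
    intro m
    have hmem : g⁻¹ * ↑m * g ∈ N := by simpa using hN.conj_mem ↑m m.2 g⁻¹
    have h1 := hcon ⟨g⁻¹ * ↑m * g, hmem⟩
    -- χ(x (g⁻¹ m g) x⁻¹) = χ(g (g⁻¹ m g) g⁻¹) = χ m
    have h2 : χ (⟨x * (g⁻¹ * ↑m * g) * x⁻¹, hN.conj_mem _ hmem x⟩ : N)
        = χ (⟨g * (g⁻¹ * ↑m * g) * g⁻¹, hN.conj_mem _ hmem g⟩ : N) := h1
    have h3 : χ (⟨g * (g⁻¹ * ↑m * g) * g⁻¹, hN.conj_mem _ hmem g⟩ : N) = χ m :=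
      chiext _ _ (by show g * (g⁻¹ * ↑m * g) * g⁻¹ = ↑m; group)
    refine Eq.trans (chiext _ _ ?_) (h2.trans h3)
    show (g * x⁻¹)⁻¹ * ↑m * (g * x⁻¹) = x * (g⁻¹ * ↑m * g) * x⁻¹
    group
  -- the coefficient function
  have hinj0 : ∀ f : IndSpace G Gχ Vχ ρχ, Φ f = 0 → f = 0 := by
    intro f hf
    apply Subtype.ext
    funext g
    show (f : G → Vχ) g = 0
    set F : G → V := fun x => ρ x⁻¹ (((f : G → Vχ) x : V)) with hFdef
    have hS : ∑ x : G, F x = 0 := hf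
    set c : G → ℂ := fun x => ∑ n : N, ((cchar hN χ g n : ℂ))⁻¹ * ((cchar hN χ x n : ℂ))
      with hcdef
    -- step: action of n on the total sum
    have step : ∀ n : N, ρ ↑n (∑ x : G, F x) = ∑ x : G, ((cchar hN χ x n : ℂ)) • F x := by
      intro n
      rw [map_sum]
      exact Finset.sum_congr rfl fun x _ => eig x _ (SetLike.coe_mem _) n
    have hT : ∑ n : N, ((cchar hN χ g n : ℂ))⁻¹ • (∑ x : G, ((cchar hN χ x n : ℂ)) • F x) = 0 := by
      have h0 : ∀ n : N, ∑ x : G, ((cchar hN χ x n : ℂ)) • F x = 0 := by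
        intro n; rw [← step n, hS, map_zero]
      simp [h0]
    have hT2 : ∑ x : G, c x • F x = 0 := by
      calc ∑ x : G, c x • F x
          = ∑ x : G, ∑ n : N, (((cchar hN χ g n : ℂ))⁻¹ * ((cchar hN χ x n : ℂ))) • F x := by
            refine Finset.sum_congr rfl fun x _ => ?_
            rw [hcdef, Finset.sum_smul]
        _ = ∑ n : N, ∑ x : G, (((cchar hN χ g n : ℂ))⁻¹ * ((cchar hN χ x n : ℂ))) • F x :=
            Finset.sum_comm
        _ = 0 := by
            rw [← hT]
            refine Finset.sum_congr rfl fun n _ => ?_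
            rw [Finset.smul_sum]
            exact Finset.sum_congr rfl fun x _ => by rw [smul_smul]
    -- evaluate the coefficients
    have hc : ∀ x : G, c x = if g * x⁻¹ ∈ Gχ then (Fintype.card N : ℂ) else 0 := by
      intro x
      by_cases hx : g * x⁻¹ ∈ Gχ
      · rw [if_pos hx, hcdef]
        have : ∀ n : N, ((cchar hN χ g n : ℂ))⁻¹ * ((cchar hN χ x n : ℂ)) = 1 := by
          intro n
          rw [claimA g x hx n]
          exact inv_mul_cancel₀ (Units.ne_zero _)
        simp [this]
      · rw [if_neg hx, hcdef]
        obtain ⟨m, hm⟩ := claimB g x hx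
        have key : ∑ n : N, (((cchar hN χ g)⁻¹ * cchar hN χ x) n : ℂ) = 0 := by
          refine sum_units_char_eq_zero _ m ?_
          intro hcon
          apply hm
          have : (cchar hN χ g m)⁻¹ * cchar hN χ x m = 1 := hcon
          rwa [inv_mul_eq_one, eq_comm] at this
        rw [← key]
        refine Finset.sum_congr rfl fun n _ => ?_
        rw [MonoidHom.mul_apply, MonoidHom.inv_apply, Units.val_mul,
          Units.val_inv_eq_inv_val]
    -- collapse the sum
    have hFx : ∀ x : G, g * x⁻¹ ∈ Gχ → F x = F g := by
      intro x hx
      have hmem : x * g⁻¹ ∈ Gχ := by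
        have := Gχ.inv_mem hx
        rwa [mul_inv_rev, inv_inv] at this
      have hf2 : ∀ (h : Gχ) (y : G), (f : G → Vχ) (↑h * y) = ρχ h ((f : G → Vχ) y) := f.2
      have h1 : (f : G → Vχ) x = ρχ ⟨x * g⁻¹, hmem⟩ ((f : G → Vχ) g) := by
        have := hf2 ⟨x * g⁻¹, hmem⟩ g
        rw [show ((⟨x * g⁻¹, hmem⟩ : Gχ) : G) * g = x by group] at this
        exact this
      show ρ x⁻¹ (((f : G → Vχ) x : V)) = ρ g⁻¹ (((f : G → Vχ) g : V))
      rw [h1, hρχ, rmul]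
      have hxg : x⁻¹ * ((⟨x * g⁻¹, hmem⟩ : Gχ) : G) = g⁻¹ := by
        show x⁻¹ * (x * g⁻¹) = g⁻¹
        group
      rw [hxg]
    have hT3 : ∑ x : G, c x • F x
        = (Finset.univ.filter (fun x : G => g * x⁻¹ ∈ Gχ)).card •
            ((Fintype.card N : ℂ) • F g) := by
      calc ∑ x : G, c x • F x
          = ∑ x : G, (if g * x⁻¹ ∈ Gχ then ((Fintype.card N : ℂ) • F g) else 0) := by
            refine Finset.sum_congr rfl fun x _ => ?_
            rw [hc x]
            by_cases hx : g * x⁻¹ ∈ Gχ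
            · rw [if_pos hx, if_pos hx, hFx x hx]
            · rw [if_neg hx, if_neg hx, zero_smul]
        _ = _ := by rw [Finset.sum_ite, Finset.sum_const_zero, add_zero, Finset.sum_const]
    have hcard : (Finset.univ.filter (fun x : G => g * x⁻¹ ∈ Gχ)).card ≠ 0 := by
      refine Finset.card_ne_zero_of_mem (a := g) ?_
      simp only [Finset.mem_filter, Finset.mem_univ, true_and, mul_inv_cancel]
      exact Gχ.one_mem
    have hFg : F g = 0 := by
      have h : (Finset.univ.filter (fun x : G => g * x⁻¹ ∈ Gχ)).card •
          ((Fintype.card N : ℂ) • F g) = 0 := by rw [← hT3, hT2]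
      rw [← Nat.cast_smul_eq_nsmul ℂ] at h
      rcases smul_eq_zero.mp h with h | h
      · exact absurd (Nat.cast_eq_zero.mp h) hcard
      rcases smul_eq_zero.mp h with h | h
      · exact absurd (Nat.cast_eq_zero.mp h) Fintype.card_ne_zero
      · exact h
    have hfg0 : ((f : G → Vχ) g : V) = 0 := by
      have h2 := congrArg (ρ g) hFg
      rwa [rcancel', map_zero] at h2
    exact Subtype.ext (by simpa using hfg0)
  -- a nonzero element of the induced space hitting a nonzero vector
  obtain ⟨v, hvmem, hv0⟩ := (Submodule.ne_bot_iff Vχ).mp hne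
  let v' : Vχ := ⟨v, hvmem⟩
  let f₀ : G → Vχ := fun x => if hx : x ∈ Gχ then ρχ ⟨x, hx⟩ v' else 0
  have hf₀ : f₀ ∈ IndSpace G Gχ Vχ ρχ := by
    show ∀ (h : Gχ) (y : G), f₀ (↑h * y) = ρχ h (f₀ y)
    intro h y
    by_cases hy : y ∈ Gχ
    · have hhy : (↑h : G) * y ∈ Gχ := Gχ.mul_mem h.2 hy
      have e1 : (⟨(↑h : G) * y, hhy⟩ : Gχ) = h * ⟨y, hy⟩ := rfl
      simp only [f₀, dif_pos hy, dif_pos hhy, e1, map_mul]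
      rfl
    · have hy2 : (↑h : G) * y ∉ Gχ := by
        intro hc
        exact hy (by simpa using Gχ.mul_mem (Gχ.inv_mem h.2) hc)
      simp only [f₀, dif_neg hy, dif_neg hy2, map_zero]
  have hΦf₀ : Φ ⟨f₀, hf₀⟩ ≠ 0 := by
    have hterm : ∀ x : G, ρ x⁻¹ ((f₀ x : V)) = if x ∈ Gχ then v else 0 := by
      intro x
      by_cases hx : x ∈ Gχ
      · simp only [f₀, dif_pos hx, if_pos hx, hρχ]
        exact rcancel x v
      · simp only [f₀, dif_neg hx, if_neg hx]
        simp
    have hΦval : Φ ⟨f₀, hf₀⟩ = (Finset.univ.filter (fun x : G => x ∈ Gχ)).card • v := by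
      rw [Φapp]
      calc ∑ x : G, ρ x⁻¹ (((⟨f₀, hf₀⟩ : IndSpace G Gχ Vχ ρχ) : G → Vχ) x : V)
          = ∑ x : G, (if x ∈ Gχ then v else 0) := Finset.sum_congr rfl fun x _ => hterm x
        _ = _ := by rw [Finset.sum_ite, Finset.sum_const_zero, add_zero, Finset.sum_const]
    rw [hΦval, ← Nat.cast_smul_eq_nsmul ℂ]
    refine smul_ne_zero ?_ hv0
    rw [Nat.cast_ne_zero]
    exact Finset.card_ne_zero_of_mem (by simpa using Gχ.one_mem : (1:G) ∈ Finset.univ.filter (fun x : G => x ∈ Gχ))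
  -- surjectivity via irreducibility
  have hsurj : Function.Surjective Φ := by
    have hinv : ∀ (a : G) (w : V), w ∈ LinearMap.range Φ → ρ a w ∈ LinearMap.range Φ := by
      rintro a w ⟨f, rfl⟩
      exact ⟨IndRep G Gχ Vχ ρχ a f, hequiv a f⟩
    rcases hirr.2 (LinearMap.range Φ) hinv with h | h
    · exfalso
      apply hΦf₀
      have : Φ ⟨f₀, hf₀⟩ ∈ LinearMap.range Φ := LinearMap.mem_range_self _ _
      rw [h, Submodule.mem_bot] at this
      exact this
    · exact LinearMap.range_eq_top.mp h
  have hinj : Function.Injective Φ := (injective_iff_map_eq_zero Φ).mpr hinj0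
  let E := LinearEquiv.ofBijective Φ ⟨hinj, hsurj⟩
  refine ⟨E.symm, ?_⟩
  intro a w
  apply E.injective
  rw [E.apply_symm_apply]
  have h1 : E (IndRep G Gχ Vχ ρχ a (E.symm w)) = Φ (IndRep G Gχ Vχ ρχ a (E.symm w)) := rfl
  rw [h1, hequiv]
  have h2 : Φ (E.symm w) = E (E.symm w) := rfl
  rw [h2, E.apply_symm_apply]
end

section
/- The Heisenberg representation of the Heisenberg group H(G) of a finite abelian group G on L²(G), given by (η̃(x',χ',z')f)(x) = z' χ'(x - x') f(x - x'), is irreducible; and every irreducible representation of H(G) on which the center U(1) acts by the identity character is isomorphic to it. -/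
/-- The Heisenberg group of a finite abelian group `G`: underlying set
`G × Ĝ × U(1)` (with the circle replaced by `ℂˣ`), multiplication
`(x,χ,z)(x',χ',z') = (x+x', χχ', zz'·χ x')`. -/
abbrev Heis (G : Type) [AddCommGroup G] : Type := G × AddChar G ℂˣ × ℂˣ

instance Heis.instMul (G : Type) [AddCommGroup G] : Mul (Heis G) :=
  ⟨fun a b => (a.1 + b.1, a.2.1 * b.2.1, a.2.2 * b.2.2 * a.2.1 b.1)⟩

instance Heis.instOne (G : Type) [AddCommGroup G] : One (Heis G) :=
  ⟨(0, 1, 1)⟩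

instance Heis.instInv (G : Type) [AddCommGroup G] : Inv (Heis G) :=
  ⟨fun a => (-a.1, a.2.1⁻¹, a.2.2⁻¹ * a.2.1 a.1)⟩

instance Heis.instGroup (G : Type) [AddCommGroup G] : Group (Heis G) :=
  Group.ofLeftAxioms
    (fun a b c => by
      refine Prod.ext (add_assoc _ _ _) (Prod.ext (mul_assoc _ _ _) ?_)
      show a.2.2 * b.2.2 * a.2.1 b.1 * c.2.2 * (a.2.1 * b.2.1) c.1 =
        a.2.2 * (b.2.2 * c.2.2 * b.2.1 c.1) * a.2.1 (b.1 + c.1)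
      rw [AddChar.mul_apply, AddChar.map_add_eq_mul]
      simp only [mul_comm, mul_left_comm, mul_assoc])
    (fun a => by
      show ((0 : G) + a.1, (1 : AddChar G ℂˣ) * a.2.1,
          1 * a.2.2 * (1 : AddChar G ℂˣ) a.1) = a
      refine Prod.ext ?_ (Prod.ext ?_ ?_)
      · exact zero_add a.1
      · exact one_mul a.2.1
      · simp)
    (fun a => by
      show (-a.1 + a.1, a.2.1⁻¹ * a.2.1,
          a.2.2⁻¹ * a.2.1 a.1 * a.2.2 * a.2.1⁻¹ a.1) = ((0 : G), 1, 1)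
      have h : a.2.1⁻¹ a.1 = (a.2.1 a.1)⁻¹ := by
        rw [AddChar.inv_apply, AddChar.map_neg_eq_inv]
      rw [h]
      refine Prod.ext ?_ (Prod.ext ?_ ?_)
      · exact neg_add_cancel a.1
      · exact inv_mul_cancel a.2.1
      · simp [mul_comm, mul_left_comm, mul_assoc])

/-- The Heisenberg representation of `Heis G` on `L²(G)`:
`(η̃ (x',χ',z') f) x = z' · χ' (x - x') · f (x - x')`. -/
def heisRep (G : Type) [AddCommGroup G] : Representation ℂ (Heis G) (G → ℂ) where
  toFun g :=
    { toFun := fun f x => (g.2.2 : ℂ) * ((g.2.1 (x - g.1) : ℂˣ) : ℂ) * f (x - g.1)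
      map_add' := fun a b => by funext x; simp [Pi.add_apply]; ring
      map_smul' := fun c a => by funext x; simp [Pi.smul_apply, smul_eq_mul]; ring }
  map_one' := by
    apply LinearMap.ext; intro f; funext x
    show ((1 : ℂˣ) : ℂ) * (((1 : AddChar G ℂˣ) (x - 0) : ℂˣ) : ℂ) * f (x - 0) = f x
    simp
  map_mul' g₁ g₂ := by
    apply LinearMap.ext; intro f; funext x
    show ((g₁.2.2 * g₂.2.2 * g₁.2.1 g₂.1 : ℂˣ) : ℂ) *
        (((g₁.2.1 * g₂.2.1) (x - (g₁.1 + g₂.1)) : ℂˣ) : ℂ) * f (x - (g₁.1 + g₂.1)) =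
      (g₁.2.2 : ℂ) * ((g₁.2.1 (x - g₁.1) : ℂˣ) : ℂ) *
        ((g₂.2.2 : ℂ) * ((g₂.2.1 (x - g₁.1 - g₂.1) : ℂˣ) : ℂ) * f (x - g₁.1 - g₂.1))
    have h1 : x - g₁.1 = (x - g₁.1 - g₂.1) + g₂.1 := by abel
    have h2 : x - (g₁.1 + g₂.1) = x - g₁.1 - g₂.1 := by abel
    have h3 : g₁.2.1 g₂.1 * g₁.2.1 (x - g₁.1 - g₂.1) = g₁.2.1 (x - g₁.1) := by
      rw [← AddChar.map_add_eq_mul]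
      congr 1
      abel
    rw [h2, AddChar.mul_apply, ← h3]
    push_cast
    ring


section Aux

open Finset

/-- The equivalence between `ℂˣ`-valued and `ℂ`-valued additive characters. -/
def charEquiv (G : Type) [AddCommGroup G] : AddChar G ℂˣ ≃ AddChar G ℂ where
  toFun χ :=
    { toFun := fun x => ((χ x : ℂˣ) : ℂ)
      map_zero_eq_one' := by simp
      map_add_eq_mul' := fun a b => by
        show ((χ (a+b) : ℂˣ) : ℂ) = _
        rw [AddChar.map_add_eq_mul]; push_cast; ring }
  invFun ψ :=
    { toFun := fun x => Units.mk (ψ x) (ψ (-x))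
        (by rw [← AddChar.map_add_eq_mul]; simp)
        (by rw [← AddChar.map_add_eq_mul]; simp)
      map_zero_eq_one' := by ext; simp
      map_add_eq_mul' := fun a b => by ext; simp [AddChar.map_add_eq_mul] }
  left_inv χ := by ext x; rfl
  right_inv ψ := by ext x; rfl

lemma charEquiv_apply {G : Type} [AddCommGroup G] (χ : AddChar G ℂˣ) (x : G) :
    charEquiv G χ x = ((χ x : ℂˣ) : ℂ) := rfl

noncomputable instance fintypeCharUnits (G : Type) [AddCommGroup G] [Finite G] :
    Fintype (AddChar G ℂˣ) := Fintype.ofEquiv _ (charEquiv G).symm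

lemma sum_char {G : Type} [AddCommGroup G] [Fintype G] [DecidableEq G] (y : G) :
    ∑ χ : AddChar G ℂˣ, ((χ y : ℂˣ) : ℂ) =
      if y = 0 then (Fintype.card G : ℂ) else 0 := by
  rw [← AddChar.sum_apply_eq_ite]
  exact Fintype.sum_equiv (charEquiv G) _ _ (fun χ => rfl)

lemma sum_G {G : Type} [AddCommGroup G] [Fintype G] (χ : AddChar G ℂˣ) :
    ∑ x : G, ((χ x : ℂˣ) : ℂ) = if χ = 1 then (Fintype.card G : ℂ) else 0 := by
  classical
  have h : ∑ x : G, ((χ x : ℂˣ) : ℂ) = ∑ x : G, charEquiv G χ x := rfl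
  rw [h, AddChar.sum_eq_ite]
  by_cases hχ : χ = 1
  · have h0 : charEquiv G χ = 0 := by subst hχ; ext x; simp [charEquiv_apply]
    rw [if_pos h0, if_pos hχ]
  · have h0 : charEquiv G χ ≠ 0 := by
      intro h0; apply hχ; ext x
      have hx := DFunLike.congr_fun h0 x
      rw [charEquiv_apply, AddChar.zero_apply] at hx
      simpa using hx
    rw [if_neg h0, if_neg hχ]


lemma heisRep_apply {G : Type} [AddCommGroup G] (g : Heis G) (f : G → ℂ) (x : G) :
    heisRep G g f x = (g.2.2 : ℂ) * ((g.2.1 (x - g.1) : ℂˣ) : ℂ) * f (x - g.1) := rfl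

lemma heis_mul {G : Type} [AddCommGroup G] (x x' : G) (χ χ' : AddChar G ℂˣ) (z z' : ℂˣ) :
    ((x, χ, z) * (x', χ', z') : Heis G) = (x + x', χ * χ', z * z' * χ x') := rfl

lemma heisRep_irrep (G : Type) [AddCommGroup G] [Finite G] : IsIrrep (heisRep G) := by
  cases nonempty_fintype G
  classical
  constructor
  · exact ⟨(fun _ => 1), fun h => one_ne_zero (congrFun h 0)⟩
  intro W hW
  by_cases hbot : W = ⊥
  · exact Or.inl hbot
  right
  obtain ⟨f, hfW, hf⟩ := Submodule.exists_mem_ne_zero_of_ne_bot hbot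
  obtain ⟨x₀, hx₀⟩ : ∃ x₀, f x₀ ≠ 0 := by
    by_contra h
    push_neg at h
    exact hf (funext h)
  set N : ℂ := (Fintype.card G : ℂ) with hN
  have hNne : N ≠ 0 := Nat.cast_ne_zero.mpr Fintype.card_ne_zero
  -- the sum over characters lands in W and is a delta function
  set g : G → ℂ := ∑ χ : AddChar G ℂˣ, (((χ x₀)⁻¹ : ℂˣ) : ℂ) • heisRep G (0, χ, 1) f with hg
  have hgW : g ∈ W :=
    Submodule.sum_mem _ fun χ _ => Submodule.smul_mem _ _ (hW _ f hfW)
  have hgval : g = fun y => (if y = x₀ then N else 0) * f y := by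
    funext y
    have : g y = ∑ χ : AddChar G ℂˣ, (((χ x₀)⁻¹ : ℂˣ) : ℂ) * heisRep G (0, χ, 1) f y := by
      rw [hg]; simp [Finset.sum_apply]
    rw [this]
    have h2 : ∀ χ : AddChar G ℂˣ, (((χ x₀)⁻¹ : ℂˣ) : ℂ) * heisRep G (0, χ, 1) f y
        = ((χ (y - x₀) : ℂˣ) : ℂ) * f y := by
      intro χ
      rw [heisRep_apply]
      have : χ (y - x₀) = (χ x₀)⁻¹ * χ y := by
        rw [sub_eq_add_neg, add_comm, AddChar.map_add_eq_mul, AddChar.map_neg_eq_inv]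
      rw [this]
      push_cast
      simp only [sub_zero, Units.val_one, one_mul]
      ring
    rw [Finset.sum_congr rfl fun χ _ => h2 χ, ← Finset.sum_mul, sum_char]
    have : y - x₀ = 0 ↔ y = x₀ := sub_eq_zero
    simp only [this, hN]
  have hδ : (fun y => if y = x₀ then (1 : ℂ) else 0) ∈ W := by
    have heq : (fun y => if y = x₀ then (1 : ℂ) else 0) = (N * f x₀)⁻¹ • g := by
      funext y
      rw [hgval]
      by_cases h : y = x₀
      · simp only [h, if_pos rfl, Pi.smul_apply, smul_eq_mul]
        field_simp
        simp
      · simp [h]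
    rw [heq]
    exact Submodule.smul_mem _ _ hgW
  have hδall : ∀ x₁ : G, (fun y => if y = x₁ then (1 : ℂ) else 0) ∈ W := by
    intro x₁
    have := hW (x₁ - x₀, 1, 1) _ hδ
    have heq : heisRep G (x₁ - x₀, 1, 1) (fun y => if y = x₀ then (1 : ℂ) else 0)
        = fun y => if y = x₁ then (1 : ℂ) else 0 := by
      funext y
      rw [heisRep_apply]
      have : y - (x₁ - x₀) = x₀ ↔ y = x₁ := by
        rw [sub_eq_iff_eq_add]
        constructor
        · intro h; rw [h]; abel
        · intro h; rw [h]; abel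
      simp [this]
    rwa [heq] at this
  rw [Submodule.eq_top_iff']
  intro f'
  have : f' = ∑ x : G, f' x • (fun y => if y = x then (1 : ℂ) else 0) := by
    funext y
    simp [Finset.sum_apply]
  rw [this]
  exact Submodule.sum_mem _ fun x _ => Submodule.smul_mem _ _ (hδall x)

end Aux

/-- Stone–von Neumann for finite abelian groups: the Heisenberg representation is
irreducible, and every irreducible representation of `H(G)` on which the centre
acts by the identity character (`σ (0,1,z) = z • id`) is isomorphic to it. -/
theorem heisenberg_irreducible_unique (G : Type) [AddCommGroup G] [Finite G]
    (W : Type) [AddCommGroup W] [Module ℂ W] (σ : Representation ℂ (Heis G) W) :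
    IsIrrep (heisRep G) ∧
    (IsIrrep σ → (∀ (z : ℂˣ) (w : W), σ (0, 1, z) w = (z : ℂ) • w) →
      ∃ e : W ≃ₗ[ℂ] (G → ℂ),
        ∀ (g : Heis G) (w : W), e (σ g w) = heisRep G g (e w)) := by
  refine ⟨heisRep_irrep G, ?_⟩
  intro hirr hz
  cases nonempty_fintype G
  classical
  -- `σ (x,χ,z) = z • σ (x,χ,1)`
  have hsmul : ∀ (x : G) (χ : AddChar G ℂˣ) (z : ℂˣ) (w : W),
      σ (x, χ, z) w = (z : ℂ) • σ (x, χ, 1) w := by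
    intro x χ z w
    have hmul : ((0 : G), (1 : AddChar G ℂˣ), z) * (x, χ, 1) = (x, χ, z) := by
      rw [heis_mul]
      refine Prod.ext (zero_add x) (Prod.ext (one_mul χ) ?_)
      show z * 1 * ((1 : AddChar G ℂˣ) x) = z
      rw [AddChar.one_apply, mul_one, mul_one]
    rw [← hmul, map_mul, Module.End.mul_apply, hz]
  have hMM : ∀ (χ χ' : AddChar G ℂˣ) (w : W),
      σ (0, χ, 1) (σ (0, χ', 1) w) = σ (0, χ * χ', 1) w := by
    intro χ χ' w
    rw [← Module.End.mul_apply, ← map_mul, heis_mul]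
    simp
  have hone : ((0 : G), (1 : AddChar G ℂˣ), (1 : ℂˣ)) = (1 : Heis G) := rfl
  have hinj : ∀ (g : Heis G) (w : W), σ g w = 0 → w = 0 := by
    intro g w h
    have h2 : σ g⁻¹ (σ g w) = w := by
      rw [← Module.End.mul_apply, ← map_mul, inv_mul_cancel, map_one, Module.End.one_apply]
    rw [h, map_zero] at h2
    exact h2.symm
  obtain ⟨⟨w₁, hw₁⟩, hσW⟩ := hirr
  set N : ℂ := (Fintype.card G : ℂ) with hN
  have hNne : N ≠ 0 := Nat.cast_ne_zero.mpr Fintype.card_ne_zero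
  set u : G → W := fun x => ∑ χ : AddChar G ℂˣ, (((χ x)⁻¹ : ℂˣ) : ℂ) • σ (0, χ, 1) w₁
    with hu
  have hsum : ∑ x : G, u x = N • w₁ := by
    have h1 : ∀ χ : AddChar G ℂˣ, ∑ x : G, (((χ x)⁻¹ : ℂˣ) : ℂ) = if χ = 1 then N else 0 := by
      intro χ
      have h2 : ∀ x : G, (((χ x)⁻¹ : ℂˣ) : ℂ) = ((χ⁻¹ x : ℂˣ) : ℂ) := by
        intro x; rw [AddChar.inv_apply']
      rw [Finset.sum_congr rfl fun x _ => h2 x, sum_G]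
      simp [inv_eq_one, hN]
    simp only [hu]
    rw [Finset.sum_comm]
    have h3 : ∀ χ : AddChar G ℂˣ, ∑ x : G, (((χ x)⁻¹ : ℂˣ) : ℂ) • σ (0, χ, 1) w₁
        = (if χ = 1 then N else 0) • σ (0, χ, 1) w₁ := by
      intro χ; rw [← Finset.sum_smul, h1 χ]
    rw [Finset.sum_congr rfl fun χ _ => h3 χ]
    simp only [ite_smul, zero_smul]
    rw [Finset.sum_ite_eq' Finset.univ (1 : AddChar G ℂˣ)
      (fun χ => N • σ (0, χ, 1) w₁)]
    simp only [Finset.mem_univ, if_pos]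
    rw [hone, map_one, Module.End.one_apply]
  have hex : ∃ x₁ : G, u x₁ ≠ 0 := by
    by_contra h
    push_neg at h
    rw [Finset.sum_congr rfl fun x _ => h x, Finset.sum_const, smul_zero] at hsum
    exact smul_ne_zero hNne hw₁ hsum.symm
  obtain ⟨x₁, hx₁⟩ := hex
  have heig : ∀ χ : AddChar G ℂˣ, σ (0, χ, 1) (u x₁) = ((χ x₁ : ℂˣ) : ℂ) • u x₁ := by
    intro χ
    have expand : σ (0, χ, 1) (u x₁)
        = ∑ χ' : AddChar G ℂˣ, (((χ' x₁)⁻¹ : ℂˣ) : ℂ) • σ (0, χ * χ', 1) w₁ := by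
      simp only [hu]
      rw [map_sum]
      exact Finset.sum_congr rfl fun χ' _ => by rw [map_smul, hMM]
    rw [expand]
    have hre : ∑ χ' : AddChar G ℂˣ, (((χ' x₁)⁻¹ : ℂˣ) : ℂ) • σ (0, χ * χ', 1) w₁
        = ∑ c : AddChar G ℂˣ,
            ((((χ⁻¹ * c) x₁)⁻¹ : ℂˣ) : ℂ) • σ (0, χ * (χ⁻¹ * c), 1) w₁ :=
      (Equiv.sum_comp (Equiv.mulLeft χ⁻¹)
        (fun χ' => (((χ' x₁)⁻¹ : ℂˣ) : ℂ) • σ (0, χ * χ', 1) w₁)).symm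
    rw [hre]
    have hterm : ∀ c : AddChar G ℂˣ,
        ((((χ⁻¹ * c) x₁)⁻¹ : ℂˣ) : ℂ) • σ (0, χ * (χ⁻¹ * c), 1) w₁
          = ((χ x₁ : ℂˣ) : ℂ) • ((((c x₁)⁻¹ : ℂˣ)) : ℂ) • σ (0, c, 1) w₁ := by
      intro c
      have e1 : χ * (χ⁻¹ * c) = c := by group
      have e2 : (((χ⁻¹ * c) x₁)⁻¹ : ℂˣ) = χ x₁ * (c x₁)⁻¹ := by
        rw [AddChar.mul_apply, AddChar.inv_apply', mul_inv, inv_inv]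
      rw [e1, e2]
      push_cast
      rw [mul_smul]
    rw [Finset.sum_congr rfl fun c _ => hterm c, ← Finset.smul_sum]
  set w₀ : W := σ (-x₁, 1, 1) (u x₁) with hw₀def
  have hw₀ : w₀ ≠ 0 := fun h => hx₁ (hinj _ _ h)
  have hcomm : ∀ (x : G) (χ : AddChar G ℂˣ) (w : W),
      σ (0, χ, 1) (σ (x, 1, 1) w) = ((χ x : ℂˣ) : ℂ) • σ (x, 1, 1) (σ (0, χ, 1) w) := by
    intro x χ w
    rw [← Module.End.mul_apply, ← map_mul, heis_mul, ← Module.End.mul_apply, ← map_mul, heis_mul]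
    simp only [zero_add, add_zero, AddChar.one_apply, mul_one, one_mul]
    rw [hsmul, mul_one χ, one_mul χ]
  have hMw₀ : ∀ χ : AddChar G ℂˣ, σ (0, χ, 1) w₀ = w₀ := by
    intro χ
    rw [hw₀def, hcomm, heig, map_smul, smul_smul]
    have : ((χ (-x₁) : ℂˣ) : ℂ) * ((χ x₁ : ℂˣ) : ℂ) = 1 := by
      rw [AddChar.map_neg_eq_inv]
      push_cast
      field_simp
    rw [this, one_smul]
  have hact : ∀ (g : Heis G) (x : G), σ g (σ (x, 1, 1) w₀)
      = ((g.2.2 : ℂ) * ((g.2.1 x : ℂˣ) : ℂ)) • σ (x + g.1, 1, 1) w₀ := by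
    rintro ⟨x', χ', z'⟩ x
    show σ (x', χ', z') (σ (x, 1, 1) w₀) = ((z' : ℂ) * ((χ' x : ℂˣ) : ℂ)) • σ (x + x', 1, 1) w₀
    rw [hsmul, ← Module.End.mul_apply, ← map_mul, heis_mul]
    have h4 : ((x' + x, χ' * 1, 1 * 1 * χ' x) : Heis G) = (x + x', χ', χ' x) := by
      refine Prod.ext (add_comm x' x) (Prod.ext (mul_one χ') ?_)
      show (1 : ℂˣ) * 1 * χ' x = χ' x
      rw [mul_one, one_mul]
    rw [h4, hsmul]
    have h5 : ((x + x', χ', (1 : ℂˣ)) : Heis G) = (x + x', 1, 1) * (0, χ', 1) := by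
      rw [heis_mul]
      refine Prod.ext (add_zero (x + x')).symm (Prod.ext (one_mul χ').symm ?_)
      show (1 : ℂˣ) = 1 * 1 * ((1 : AddChar G ℂˣ) 0)
      rw [AddChar.one_apply, mul_one, mul_one]
    rw [h5, map_mul, Module.End.mul_apply, hMw₀, smul_smul]
  obtain ⟨E, hE⟩ : ∃ E : (G → ℂ) →ₗ[ℂ] W,
      ∀ f : G → ℂ, E f = ∑ x : G, f x • σ (x, 1, 1) w₀ :=
    ⟨{ toFun := fun f => ∑ x : G, f x • σ (x, 1, 1) w₀
       map_add' := fun f₁ f₂ => by simp [add_smul, Finset.sum_add_distrib]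
       map_smul' := fun c f => by simp [Finset.smul_sum, mul_smul] }, fun f => rfl⟩
  have hint : ∀ (g : Heis G) (f : G → ℂ), E (heisRep G g f) = σ g (E f) := by
    intro g f
    rw [hE, hE, map_sum]
    have hR : ∀ x : G, σ g (f x • σ (x, 1, 1) w₀)
        = ((g.2.2 : ℂ) * ((g.2.1 x : ℂˣ) : ℂ) * f x) • σ (x + g.1, 1, 1) w₀ := by
      intro x
      rw [map_smul, hact, smul_smul]
      congr 1
      ring
    rw [Finset.sum_congr rfl fun x _ => hR x]
    refine (Fintype.sum_equiv (Equiv.addRight g.1) _ _ ?_).symm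
    intro x
    show ((g.2.2 : ℂ) * ((g.2.1 x : ℂˣ) : ℂ) * f x) • σ (x + g.1, 1, 1) w₀
      = heisRep G g f (x + g.1) • σ (x + g.1, 1, 1) w₀
    rw [heisRep_apply, add_sub_cancel_right]
  have hEδ : E (fun y => if y = 0 then (1 : ℂ) else 0) = w₀ := by
    rw [hE]
    simp only [ite_smul, one_smul, zero_smul]
    rw [Finset.sum_ite_eq' Finset.univ (0 : G) (fun x => σ (x, 1, 1) w₀)]
    simp only [Finset.mem_univ, if_pos]
    rw [hone, map_one, Module.End.one_apply]
  have hker : LinearMap.ker E = ⊥ := by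
    have hinv : ∀ (g : Heis G) (v : G → ℂ), v ∈ LinearMap.ker E →
        heisRep G g v ∈ LinearMap.ker E := by
      intro g v hv
      rw [LinearMap.mem_ker] at hv ⊢
      rw [hint, hv, map_zero]
    rcases (heisRep_irrep G).2 (LinearMap.ker E) hinv with h | h
    · exact h
    · exfalso
      have h6 : E (fun y => if y = 0 then (1 : ℂ) else 0) = 0 := by
        have : (fun y => if y = 0 then (1 : ℂ) else 0) ∈ LinearMap.ker E := by
          rw [h]; trivial
        rwa [LinearMap.mem_ker] at this
      rw [hEδ] at h6
      exact hw₀ h6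
  have hrange : LinearMap.range E = ⊤ := by
    have hinv : ∀ (g : Heis G) (w : W), w ∈ LinearMap.range E →
        σ g w ∈ LinearMap.range E := by
      intro g w hw
      obtain ⟨f, rfl⟩ := hw
      exact ⟨heisRep G g f, hint g f⟩
    rcases hσW (LinearMap.range E) hinv with h | h
    · exfalso
      have h7 : w₀ ∈ LinearMap.range E := ⟨_, hEδ⟩
      rw [h] at h7
      exact hw₀ (by simpa using h7)
    · exact h
  have hbij : Function.Bijective E :=
    ⟨LinearMap.ker_eq_bot.mp hker, LinearMap.range_eq_top.mp hrange⟩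
  refine ⟨(LinearEquiv.ofBijective E hbij).symm, ?_⟩
  intro g w
  apply (LinearEquiv.ofBijective E hbij).injective
  rw [LinearEquiv.apply_symm_apply]
  have h8 : (LinearEquiv.ofBijective E hbij) (heisRep G g ((LinearEquiv.ofBijective E hbij).symm w))
      = E (heisRep G g ((LinearEquiv.ofBijective E hbij).symm w)) := rfl
  rw [h8, hint]
  have h9 : E ((LinearEquiv.ofBijective E hbij).symm w)
      = (LinearEquiv.ofBijective E hbij) ((LinearEquiv.ofBijective E hbij).symm w) := rfl
  rw [h9, LinearEquiv.apply_symm_apply]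
end

section
/- Every irreducible cuspidal representation of GL_2(F_q) has degree divisible by q - 1. -/
open Matrix

open Matrix

noncomputable section Aux

variable {F : Type} [Field F]

/-- unipotent upper triangular matrix as an element of GL₂ -/
def unip (x : F) : GL (Fin 2) F where
  val := !![1, x; 0, 1]
  inv := !![1, -x; 0, 1]
  val_inv := by rw [Matrix.mul_fin_two, Matrix.one_fin_two]; congr 1 <;> ring
  inv_val := by rw [Matrix.mul_fin_two, Matrix.one_fin_two]; congr 1 <;> ring

@[simp] lemma unip_coe (x : F) : (unip x : Matrix (Fin 2) (Fin 2) F) = !![1, x; 0, 1] := rfl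

lemma unip_mul (x y : F) : unip x * unip y = unip (x + y) := by
  ext : 1
  show (!![1, x; 0, 1] : Matrix (Fin 2) (Fin 2) F) * !![1, y; 0, 1] = _
  rw [Matrix.mul_fin_two]; congr 1 <;> ring

@[simp] lemma unip_zero : (unip (0:F)) = 1 := by
  ext : 1
  show (!![1, 0; 0, 1] : Matrix (Fin 2) (Fin 2) F) = 1
  rw [Matrix.one_fin_two]

/-- diagonal matrix as an element of GL₂ -/
def diagGL (u v : Fˣ) : GL (Fin 2) F where
  val := !![(u:F), 0; 0, (v:F)]
  inv := !![((u⁻¹:Fˣ):F), 0; 0, ((v⁻¹:Fˣ):F)]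
  val_inv := by
    rw [Matrix.mul_fin_two, Matrix.one_fin_two]
    congr 1 <;> simp
  inv_val := by
    rw [Matrix.mul_fin_two, Matrix.one_fin_two]
    congr 1 <;> simp

@[simp] lemma diagGL_coe (u v : Fˣ) :
    (diagGL u v : Matrix (Fin 2) (Fin 2) F) = !![(u:F), 0; 0, (v:F)] := rfl

lemma diagGL_mul (u v u' v' : Fˣ) :
    diagGL u v * diagGL u' v' = diagGL (u * u') (v * v') := by
  ext : 1
  show (!![(u:F), 0; 0, (v:F)]) * !![(u':F), 0; 0, (v':F)] = _
  rw [Matrix.mul_fin_two]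
  norm_num

@[simp] lemma diagGL_one : (diagGL 1 1 : GL (Fin 2) F) = 1 := by
  ext : 1
  show (!![(1:F), 0; 0, (1:F)]) = 1
  rw [Matrix.one_fin_two]

lemma diagGL_mul_unip (u v : Fˣ) (x : F) :
    diagGL u v * unip x = unip ((u : F) * x * ((v⁻¹ : Fˣ) : F)) * diagGL u v := by
  ext : 1
  show (!![(u:F), 0; 0, (v:F)]) * !![1, x; 0, 1]
      = !![1, (u:F) * x * ((v⁻¹:Fˣ):F); 0, 1] * !![(u:F), 0; 0, (v:F)]
  rw [Matrix.mul_fin_two, Matrix.mul_fin_two]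
  norm_num

end Aux

noncomputable section Aux2

variable {G : Type} [Group G] [Fintype G]

lemma pow_congr_of_pow_orderOf_eq_one {G : Type} [Group G] (g : G) (c : ℂˣ)
    (hc : c ^ orderOf g = 1) {i j : ℕ} (h : g ^ i = g ^ j) : c ^ i = c ^ j := by
  rw [pow_eq_pow_iff_modEq] at h ⊢
  exact h.of_dvd (orderOf_dvd_of_pow_eq_one hc)

private def gexp (g : G) (hg : ∀ x : G, x ∈ Subgroup.zpowers g) (x : G) : ℕ :=
  Classical.choose ((mem_powers_iff_mem_zpowers).2 (hg x))

private lemma gexp_spec (g : G) (hg : ∀ x : G, x ∈ Subgroup.zpowers g) (x : G) :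
    g ^ gexp g hg x = x :=
  Classical.choose_spec ((mem_powers_iff_mem_zpowers).2 (hg x))

/-- The character of a cyclic group sending the generator `g` to `c`. -/
def genChar (g : G) (hg : ∀ x : G, x ∈ Subgroup.zpowers g) (c : ℂˣ)
    (hc : c ^ orderOf g = 1) : G →* ℂˣ where
  toFun x := c ^ gexp g hg x
  map_one' := by
    have h1 : g ^ gexp g hg 1 = g ^ 0 := by rw [gexp_spec, pow_zero]
    show c ^ gexp g hg 1 = 1
    rw [pow_congr_of_pow_orderOf_eq_one g c hc h1, pow_zero]
  map_mul' x y := by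
    have h1 : g ^ gexp g hg (x * y) = g ^ (gexp g hg x + gexp g hg y) := by
      rw [gexp_spec, pow_add, gexp_spec, gexp_spec]
    show c ^ gexp g hg (x * y) = c ^ gexp g hg x * c ^ gexp g hg y
    rw [pow_congr_of_pow_orderOf_eq_one g c hc h1, pow_add]

lemma genChar_pow (g : G) (hg : ∀ x : G, x ∈ Subgroup.zpowers g) (c : ℂˣ)
    (hc : c ^ orderOf g = 1) (k : ℕ) : genChar g hg c hc (g ^ k) = c ^ k := by
  have h1 : g ^ gexp g hg (g ^ k) = g ^ k := gexp_spec g hg _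
  exact pow_congr_of_pow_orderOf_eq_one g c hc h1

lemma exists_pow_nat (g : G) (hg : ∀ x : G, x ∈ Subgroup.zpowers g) (x : G) :
    ∃ k : ℕ, g ^ k = x := ⟨gexp g hg x, gexp_spec g hg x⟩

end Aux2

section Eig

/-- Two commuting endomorphisms of a nontrivial f.d. complex vector space have a
common eigenvector. -/
lemma exists_common_eigenvector {V : Type*} [AddCommGroup V] [Module ℂ V]
    [FiniteDimensional ℂ V] (hV : ∃ v : V, v ≠ 0) (f g : Module.End ℂ V)
    (hfg : f * g = g * f) :
    ∃ (v : V) (a b : ℂ), v ≠ 0 ∧ f v = a • v ∧ g v = b • v := by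
  have : Nontrivial V := by obtain ⟨v, hv⟩ := hV; exact nontrivial_of_ne v 0 hv
  obtain ⟨a, ha⟩ := Module.End.exists_eigenvalue f
  set E := f.eigenspace a with hE
  obtain ⟨w₀, hw₀⟩ := ha.exists_hasEigenvector
  have hEne : Nontrivial E := nontrivial_of_ne ⟨w₀, hw₀.1⟩ 0
    (fun h => hw₀.2 (by simpa using congrArg Subtype.val h))
  have hmap : ∀ v ∈ E, g v ∈ E := by
    intro v hv
    rw [Module.End.mem_eigenspace_iff] at hv ⊢
    have := congrArg (fun h => h v) hfg
    simp only [Module.End.mul_apply] at this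
    rw [this, hv, _root_.map_smul]
  have : FiniteDimensional ℂ E := inferInstance
  obtain ⟨b, hb⟩ := Module.End.exists_eigenvalue (g.restrict hmap)
  obtain ⟨w, hw⟩ := hb.exists_hasEigenvector
  refine ⟨(w : V), a, b, ?_, ?_, ?_⟩
  · exact fun h => hw.right (Subtype.ext h)
  · exact Module.End.mem_eigenspace_iff.1 w.2
  · have := hw.apply_eq_smul
    have := congrArg (Subtype.val) this
    simpa using this

end Eig
/-- Extension of a character of `F_q*` to `F_q` by zero. -/
noncomputable def extChar {F : Type} [Field F] (χ : Fˣ →* ℂˣ) (a : F) : ℂ :=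
  by classical exact if h : IsUnit a then (χ h.unit : ℂ) else 0

/-- A representation `ρ` of `GL₂(F_q)` is cuspidal if
`Hom(ρ, I(χ₁, χ₂)) = 0` for all characters `χ₁, χ₂` of `F_q*`, where
`I(χ₁, χ₂)` is the representation parabolically induced from the character
`[[y₁, *], [0, y₂]] ↦ χ₁ y₁ * χ₂ y₂` of the Borel subgroup, with the group acting
by right translation. -/
def IsCuspidal {F : Type} [Field F] {V : Type} [AddCommGroup V] [Module ℂ V]
    (ρ : Representation ℂ (GL (Fin 2) F) V) : Prop :=
  ∀ (χ₁ χ₂ : Fˣ →* ℂˣ) (φ : V →ₗ[ℂ] (GL (Fin 2) F → ℂ)),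
    (∀ (v : V) (b g : GL (Fin 2) F), (b : Matrix (Fin 2) (Fin 2) F) 1 0 = 0 →
      φ v (b * g) =
        extChar χ₁ ((b : Matrix (Fin 2) (Fin 2) F) 0 0) *
          extChar χ₂ ((b : Matrix (Fin 2) (Fin 2) F) 1 1) * φ v g) →
    (∀ (g : GL (Fin 2) F) (v : V) (x : GL (Fin 2) F), φ (ρ g v) x = φ v (x * g)) →
    φ = 0


noncomputable section Proj

variable {F : Type} [Field F] [Fintype F] {V : Type} [AddCommGroup V] [Module ℂ V]
  [FiniteDimensional ℂ V] (ρ : Representation ℂ (GL (Fin 2) F) V)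

/-- The projection onto the `ψ`-eigenspace of the unipotent subgroup. -/
def projChar (ψ : AddChar F ℂ) : V →ₗ[ℂ] V :=
  (Fintype.card F : ℂ)⁻¹ • ∑ x : F, ψ (-x) • (ρ (unip x) : V →ₗ[ℂ] V)

lemma projChar_apply (ψ : AddChar F ℂ) (v : V) :
    projChar ρ ψ v = (Fintype.card F : ℂ)⁻¹ • ∑ x : F, ψ (-x) • ρ (unip x) v := by
  simp [projChar, LinearMap.sum_apply, LinearMap.smul_apply]

lemma projChar_unip (ψ : AddChar F ℂ) (y : F) (v : V) :
    projChar ρ ψ (ρ (unip y) v) = ψ y • projChar ρ ψ v := by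
  rw [projChar_apply, projChar_apply, smul_comm (ψ y) ((Fintype.card F : ℂ)⁻¹)]
  congr 1
  rw [Finset.smul_sum]
  refine Fintype.sum_equiv (Equiv.addRight y)
    (fun x : F => ψ (-x) • ρ (unip x) (ρ (unip y) v))
    (fun z : F => ψ y • (ψ (-z) • ρ (unip z) v)) ?_
  intro x
  simp only [Equiv.coe_addRight]
  have h1 : ρ (unip x) (ρ (unip y) v) = ρ (unip (x + y)) v := by
    rw [← unip_mul, _root_.map_mul]; rfl
  rw [h1, smul_smul, ← AddChar.map_add_eq_mul]
  congr 2
  ring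

lemma projChar_idem (ψ : AddChar F ℂ) (v : V) :
    projChar ρ ψ (projChar ρ ψ v) = projChar ρ ψ v := by
  have hq : (Fintype.card F : ℂ) ≠ 0 := Nat.cast_ne_zero.2 Fintype.card_ne_zero
  conv_lhs => rw [projChar_apply ρ ψ v]
  rw [_root_.map_smul, map_sum]
  have : ∀ x : F, projChar ρ ψ (ψ (-x) • ρ (unip x) v) = (ψ (-x) * ψ x) • projChar ρ ψ v := by
    intro x
    rw [_root_.map_smul, projChar_unip, smul_smul]
  simp only [this, ← AddChar.map_add_eq_mul, neg_add_cancel, AddChar.map_zero_eq_one, one_smul]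
  rw [Finset.sum_const, Finset.card_univ, ← Nat.cast_smul_eq_nsmul ℂ, smul_smul,
    inv_mul_cancel₀ hq, one_smul]

lemma sum_projChar : ∑ ψ : AddChar F ℂ, projChar ρ ψ = LinearMap.id := by
  classical
  have hq : (Fintype.card F : ℂ) ≠ 0 := Nat.cast_ne_zero.2 Fintype.card_ne_zero
  unfold projChar
  rw [← Finset.smul_sum, Finset.sum_comm]
  have : ∀ x : F, (∑ ψ : AddChar F ℂ, ψ (-x) • (ρ (unip x) : V →ₗ[ℂ] V))
      = (if x = 0 then (Fintype.card F : ℂ) else 0) • (ρ (unip x) : V →ₗ[ℂ] V) := by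
    intro x
    rw [← Finset.sum_smul, AddChar.sum_apply_eq_ite, neg_eq_zero]
  rw [Finset.sum_congr rfl (fun x _ => this x)]
  simp only [ite_smul, zero_smul]
  rw [Finset.sum_ite_eq' Finset.univ (0 : F) (fun x => (Fintype.card F : ℂ) • (ρ (unip x) : V →ₗ[ℂ] V))]
  simp only [Finset.mem_univ, if_true]
  rw [unip_zero, _root_.map_one, smul_smul, inv_mul_cancel₀ hq, one_smul]
  rfl
lemma projChar_conj (ψ : AddChar F ℂ) (u : Fˣ) :
    LinearMap.trace ℂ V (projChar ρ (ψ.mulShift (u : F))) = LinearMap.trace ℂ V (projChar ρ ψ) := by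
  set d : GL (Fin 2) F := diagGL u⁻¹ 1 with hd
  set f : (V →ₗ[ℂ] V)ˣ :=
    ⟨ρ d, ρ d⁻¹, by rw [← _root_.map_mul, mul_inv_cancel, _root_.map_one],
      by rw [← _root_.map_mul, inv_mul_cancel, _root_.map_one]⟩
    with hf
  have key : projChar ρ (ψ.mulShift (u : F)) = (f : V →ₗ[ℂ] V) * projChar ρ ψ * (↑f⁻¹ : V →ₗ[ℂ] V) := by
    show _ = (ρ d) * projChar ρ ψ * (ρ d⁻¹)
    unfold projChar
    rw [mul_smul_comm, smul_mul_assoc]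
    congr 1
    rw [Finset.mul_sum, Finset.sum_mul]
    refine Fintype.sum_equiv (Equiv.mulLeft₀ ((u : Fˣ) : F) (Units.ne_zero _))
      (fun x : F => (ψ.mulShift (u : F)) (-x) • (ρ (unip x) : V →ₗ[ℂ] V))
      (fun z : F => (ρ d : V →ₗ[ℂ] V) * (ψ (-z) • (ρ (unip z) : V →ₗ[ℂ] V)) * (ρ d⁻¹ : V →ₗ[ℂ] V)) ?_
    intro x
    simp only [AddChar.mulShift_apply]
    have hconj : d * unip ((u : F) * x) * d⁻¹ = unip x := by
      rw [hd, diagGL_mul_unip]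
      have hcoef : (((u⁻¹ : Fˣ) : F)) * ((u : F) * x) * (((1⁻¹ : Fˣ) : F)) = x := by
        rw [← mul_assoc]
        norm_num
      rw [hcoef, mul_assoc, mul_inv_cancel, mul_one]
    have h2 : (ρ d : V →ₗ[ℂ] V) * (ρ (unip ((u : F) * x)) : V →ₗ[ℂ] V) * (ρ d⁻¹ : V →ₗ[ℂ] V)
        = ρ (unip x) := by
      rw [← hconj, _root_.map_mul, _root_.map_mul]
    show ψ ((u : F) * -x) • (ρ (unip x) : V →ₗ[ℂ] V)
        = (ρ d : V →ₗ[ℂ] V) * (ψ (-((u : F) * x)) • (ρ (unip ((u : F) * x)) : V →ₗ[ℂ] V))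
          * (ρ d⁻¹ : V →ₗ[ℂ] V)
    rw [mul_smul_comm, smul_mul_assoc, h2, mul_neg]
  rw [key]
  exact LinearMap.trace_conj (R := ℂ) (M := V) (projChar ρ ψ) f
lemma cuspidal_dual_eq_zero (hcusp : IsCuspidal ρ) (ℓ : Module.Dual ℂ V)
    (hℓ : ∀ (x : F) (v : V), ℓ (ρ (unip x) v) = ℓ v) (hne : ℓ ≠ 0) : False := by
  classical
  let W : Submodule ℂ (Module.Dual ℂ V) :=
    { carrier := {m | ∀ (x : F) (v : V), m (ρ (unip x) v) = m v}
      add_mem' := fun ha hb x v => by simp only [LinearMap.add_apply, ha x v, hb x v]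
      zero_mem' := fun x v => by simp
      smul_mem' := fun c m hm x v => by simp only [LinearMap.smul_apply, hm x v] }
  obtain ⟨g, hg⟩ := IsCyclic.exists_generator (α := Fˣ)
  let A₁ : Module.End ℂ (Module.Dual ℂ V) := (ρ (diagGL g 1)).dualMap
  let A₂ : Module.End ℂ (Module.Dual ℂ V) := (ρ (diagGL 1 g)).dualMap
  have hstep : ∀ (u v' : Fˣ) (m : Module.Dual ℂ V), m ∈ W → ∀ (x : F) (w : V),
      m (ρ (diagGL u v') (ρ (unip x) w)) = m (ρ (diagGL u v') w) := by
    intro u v' m hm x w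
    calc m (ρ (diagGL u v') (ρ (unip x) w)) = m (ρ (diagGL u v' * unip x) w) := by
          rw [_root_.map_mul]; rfl
      _ = m (ρ (unip ((u : F) * x * ((v'⁻¹ : Fˣ) : F)) * diagGL u v') w) := by
          rw [diagGL_mul_unip]
      _ = m (ρ (unip ((u : F) * x * ((v'⁻¹ : Fˣ) : F))) (ρ (diagGL u v') w)) := by
          rw [_root_.map_mul]; rfl
      _ = m (ρ (diagGL u v') w) := hm _ _
  have hW₁ : ∀ m ∈ W, A₁ m ∈ W := fun m hm x w => hstep g 1 m hm x w
  have hW₂ : ∀ m ∈ W, A₂ m ∈ W := fun m hm x w => hstep 1 g m hm x w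
  have hcommd : diagGL (F := F) g 1 * diagGL 1 g = diagGL 1 g * diagGL g 1 := by
    rw [diagGL_mul, diagGL_mul, mul_one, one_mul]
  have hcomm : ∀ m : Module.Dual ℂ V, A₁ (A₂ m) = A₂ (A₁ m) := by
    intro m
    apply LinearMap.ext
    intro v
    show m (ρ (diagGL 1 g) (ρ (diagGL g 1) v)) = m (ρ (diagGL g 1) (ρ (diagGL 1 g) v))
    have : ρ (diagGL (F := F) 1 g) * ρ (diagGL g 1) = ρ (diagGL g 1) * ρ (diagGL 1 g) := by
      rw [← _root_.map_mul, ← _root_.map_mul, hcommd]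
    calc m (ρ (diagGL 1 g) (ρ (diagGL g 1) v))
        = m ((ρ (diagGL 1 g) * ρ (diagGL g 1)) v) := rfl
      _ = m ((ρ (diagGL g 1) * ρ (diagGL 1 g)) v) := by rw [this]
      _ = _ := rfl
  let B₁ : Module.End ℂ W := A₁.restrict hW₁
  let B₂ : Module.End ℂ W := A₂.restrict hW₂
  have hB : B₁ * B₂ = B₂ * B₁ := by
    apply LinearMap.ext
    rintro ⟨m, hm⟩
    apply Subtype.ext
    show (A₁.restrict hW₁) ((A₂.restrict hW₂) ⟨m, hm⟩) = ((A₂.restrict hW₂) ((A₁.restrict hW₁) ⟨m, hm⟩) : Module.Dual ℂ V)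
    rw [LinearMap.restrict_coe_apply, LinearMap.restrict_coe_apply, LinearMap.restrict_coe_apply,
      LinearMap.restrict_coe_apply]
    exact hcomm m
  have hWne : ∃ w : W, w ≠ 0 :=
    ⟨⟨ℓ, hℓ⟩, fun h => hne (by simpa using congrArg Subtype.val h)⟩
  obtain ⟨w, c₁, c₂, hw0, hw1, hw2⟩ := exists_common_eigenvector hWne B₁ B₂ hB
  set m : Module.Dual ℂ V := (w : Module.Dual ℂ V) with hmdef
  have hmW : m ∈ W := w.2
  have hmne : m ≠ 0 := fun h => hw0 (Subtype.ext h)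
  have hA₁ : A₁ m = c₁ • m := by
    have := congrArg Subtype.val hw1
    rw [LinearMap.restrict_coe_apply] at this
    simpa using this
  have hA₂ : A₂ m = c₂ • m := by
    have := congrArg Subtype.val hw2
    rw [LinearMap.restrict_coe_apply] at this
    simpa using this
  have hc₁ : ∀ v : V, m (ρ (diagGL g 1) v) = c₁ * m v := by
    intro v
    have := congrArg (fun t : Module.Dual ℂ V => t v) hA₁
    simpa [A₁] using this
  have hc₂ : ∀ v : V, m (ρ (diagGL 1 g) v) = c₂ * m v := by
    intro v
    have := congrArg (fun t : Module.Dual ℂ V => t v) hA₂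
    simpa [A₂] using this
  have hpow₁ : ∀ (k : ℕ) (v : V), m (ρ (diagGL (g ^ k) 1) v) = c₁ ^ k * m v := by
    intro k
    induction k with
    | zero => intro v; rw [pow_zero, pow_zero, one_mul, diagGL_one, _root_.map_one]; rfl
    | succ k ih =>
      intro v
      have hd : diagGL (F := F) (g ^ (k+1)) 1 = diagGL (g ^ k) 1 * diagGL g 1 := by
        rw [diagGL_mul, ← pow_succ, mul_one]
      rw [hd, _root_.map_mul]
      calc m (ρ (diagGL (g ^ k) 1) ((ρ (diagGL g 1)) v)) = c₁ ^ k * m (ρ (diagGL g 1) v) :=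
            ih _
        _ = c₁ ^ (k+1) * m v := by rw [hc₁, pow_succ]; ring
  have hpow₂ : ∀ (k : ℕ) (v : V), m (ρ (diagGL 1 (g ^ k)) v) = c₂ ^ k * m v := by
    intro k
    induction k with
    | zero => intro v; rw [pow_zero, pow_zero, one_mul, diagGL_one, _root_.map_one]; rfl
    | succ k ih =>
      intro v
      have hd : diagGL (F := F) 1 (g ^ (k+1)) = diagGL 1 (g ^ k) * diagGL 1 g := by
        rw [diagGL_mul, ← pow_succ, mul_one]
      rw [hd, _root_.map_mul]
      calc m (ρ (diagGL 1 (g ^ k)) ((ρ (diagGL 1 g)) v)) = c₂ ^ k * m (ρ (diagGL 1 g) v) :=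
            ih _
        _ = c₂ ^ (k+1) * m v := by rw [hc₂, pow_succ]; ring
  obtain ⟨v₀, hv₀⟩ : ∃ v : V, m v ≠ 0 := by
    by_contra h
    push_neg at h
    exact hmne (LinearMap.ext fun v => by simpa using h v)
  have hord₁ : c₁ ^ orderOf g = 1 := by
    have h1 : m (ρ (diagGL (g ^ orderOf g) 1) v₀) = c₁ ^ orderOf g * m v₀ := hpow₁ _ _
    rw [pow_orderOf_eq_one, diagGL_one, _root_.map_one, Module.End.one_apply] at h1
    have h2 : c₁ ^ orderOf g * m v₀ = 1 * m v₀ := by rw [one_mul]; exact h1.symm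
    exact mul_right_cancel₀ hv₀ h2
  have hord₂ : c₂ ^ orderOf g = 1 := by
    have h1 : m (ρ (diagGL 1 (g ^ orderOf g)) v₀) = c₂ ^ orderOf g * m v₀ := hpow₂ _ _
    rw [pow_orderOf_eq_one, diagGL_one, _root_.map_one, Module.End.one_apply] at h1
    have h2 : c₂ ^ orderOf g * m v₀ = 1 * m v₀ := by rw [one_mul]; exact h1.symm
    exact mul_right_cancel₀ hv₀ h2
  have hc₁0 : c₁ ≠ 0 := fun h =>
    one_ne_zero (α := ℂ) (by rw [← hord₁, h, zero_pow (orderOf_pos g).ne'])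
  have hc₂0 : c₂ ≠ 0 := fun h =>
    one_ne_zero (α := ℂ) (by rw [← hord₂, h, zero_pow (orderOf_pos g).ne'])
  set cu₁ : ℂˣ := Units.mk0 c₁ hc₁0 with hcu₁def
  set cu₂ : ℂˣ := Units.mk0 c₂ hc₂0 with hcu₂def
  have hcu₁ : cu₁ ^ orderOf g = 1 := by
    apply Units.ext
    rw [Units.val_pow_eq_pow_val]
    simpa [cu₁] using hord₁
  have hcu₂ : cu₂ ^ orderOf g = 1 := by
    apply Units.ext
    rw [Units.val_pow_eq_pow_val]
    simpa [cu₂] using hord₂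
  set χ₁ : Fˣ →* ℂˣ := genChar g hg cu₁ hcu₁ with hχ₁def
  set χ₂ : Fˣ →* ℂˣ := genChar g hg cu₂ hcu₂ with hχ₂def
  have hdiagm : ∀ (y₁ y₂ : Fˣ) (v : V),
      m (ρ (diagGL y₁ y₂) v) = (χ₁ y₁ : ℂ) * ((χ₂ y₂ : ℂ) * m v) := by
    intro y₁ y₂ v
    obtain ⟨k₁, hk₁⟩ := exists_pow_nat g hg y₁
    obtain ⟨k₂, hk₂⟩ := exists_pow_nat g hg y₂
    have hd : diagGL (F := F) y₁ y₂ = diagGL (g ^ k₁) 1 * diagGL 1 (g ^ k₂) := by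
      rw [diagGL_mul, mul_one, one_mul, hk₁, hk₂]
    have hval₁ : (χ₁ y₁ : ℂ) = c₁ ^ k₁ := by
      rw [← hk₁, hχ₁def, genChar_pow]
      simp [hcu₁def]
    have hval₂ : (χ₂ y₂ : ℂ) = c₂ ^ k₂ := by
      rw [← hk₂, hχ₂def, genChar_pow]
      simp [hcu₂def]
    rw [hd, _root_.map_mul, hval₁, hval₂]
    calc m (ρ (diagGL (g ^ k₁) 1) ((ρ (diagGL 1 (g ^ k₂))) v))
        = c₁ ^ k₁ * m (ρ (diagGL 1 (g ^ k₂)) v) := hpow₁ _ _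
      _ = c₁ ^ k₁ * (c₂ ^ k₂ * m v) := by rw [hpow₂]
  let φ : V →ₗ[ℂ] (GL (Fin 2) F → ℂ) :=
    { toFun := fun v x => m (ρ x v)
      map_add' := fun v w => by funext x; simp
      map_smul' := fun c v => by funext x; simp }
  have h1 : ∀ (v : V) (b x : GL (Fin 2) F), (b : Matrix (Fin 2) (Fin 2) F) 1 0 = 0 →
      φ v (b * x) =
        extChar χ₁ ((b : Matrix (Fin 2) (Fin 2) F) 0 0) *
          extChar χ₂ ((b : Matrix (Fin 2) (Fin 2) F) 1 1) * φ v x := by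
    intro v b x hb10
    have hdet : IsUnit ((b : Matrix (Fin 2) (Fin 2) F).det) :=
      (Matrix.isUnit_iff_isUnit_det _).1 ⟨b, rfl⟩
    have hdet2 : (b : Matrix (Fin 2) (Fin 2) F).det
        = (b : Matrix (Fin 2) (Fin 2) F) 0 0 * (b : Matrix (Fin 2) (Fin 2) F) 1 1 := by
      rw [Matrix.det_fin_two, hb10]
      ring
    rw [hdet2] at hdet
    have h00 : IsUnit ((b : Matrix (Fin 2) (Fin 2) F) 0 0) := isUnit_of_mul_isUnit_left hdet
    have h11 : IsUnit ((b : Matrix (Fin 2) (Fin 2) F) 1 1) := isUnit_of_mul_isUnit_right hdet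
    set u₀ : Fˣ := h00.unit with hu₀
    set u₁ : Fˣ := h11.unit with hu₁
    have hbdec : b = diagGL u₀ u₁ * unip (((u₀⁻¹ : Fˣ) : F) * (b : Matrix (Fin 2) (Fin 2) F) 0 1) := by
      ext : 1
      show (b : Matrix (Fin 2) (Fin 2) F)
          = (!![(u₀ : F), 0; 0, (u₁ : F)]) * !![1, ((u₀⁻¹ : Fˣ) : F) * (b : Matrix (Fin 2) (Fin 2) F) 0 1; 0, 1]
      rw [Matrix.mul_fin_two]
      ext i j
      fin_cases i <;> fin_cases j <;>
        simp [hb10, hu₀, hu₁, h00.unit_spec, h11.unit_spec, Units.mul_inv_cancel_left,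
          mul_inv_cancel_left₀ h00.ne_zero]
    have hext₁ : extChar χ₁ ((b : Matrix (Fin 2) (Fin 2) F) 0 0) = (χ₁ u₀ : ℂ) := by
      simp only [extChar, dif_pos h00, hu₀]
    have hext₂ : extChar χ₂ ((b : Matrix (Fin 2) (Fin 2) F) 1 1) = (χ₂ u₁ : ℂ) := by
      simp only [extChar, dif_pos h11, hu₁]
    rw [hext₁, hext₂]
    show m (ρ (b * x) v) = _
    conv_lhs => rw [hbdec]
    rw [mul_assoc, _root_.map_mul, _root_.map_mul]
    calc m (ρ (diagGL u₀ u₁) ((ρ (unip _)) ((ρ x) v)))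
        = (χ₁ u₀ : ℂ) * ((χ₂ u₁ : ℂ) * m ((ρ (unip _)) ((ρ x) v))) := hdiagm _ _ _
      _ = (χ₁ u₀ : ℂ) * ((χ₂ u₁ : ℂ) * m ((ρ x) v)) := by rw [hmW _ _]
      _ = (χ₁ u₀ : ℂ) * (χ₂ u₁ : ℂ) * m ((ρ x) v) := by ring
  have h2 : ∀ (gg : GL (Fin 2) F) (v : V) (x : GL (Fin 2) F), φ (ρ gg v) x = φ v (x * gg) := by
    intro gg v x
    show m (ρ x (ρ gg v)) = m (ρ (x * gg) v)
    rw [_root_.map_mul]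
    rfl
  have hzero := hcusp χ₁ χ₂ φ h1 h2
  have : φ v₀ 1 = 0 := by rw [hzero]; rfl
  apply hv₀
  have hφ : φ v₀ 1 = m v₀ := by
    show m (ρ 1 v₀) = m v₀
    rw [_root_.map_one]
    rfl
  rw [← hφ, this]

lemma projChar_one_eq_zero (hcusp : IsCuspidal ρ) : projChar ρ (1 : AddChar F ℂ) = 0 := by
  have hinv : ∀ (y : F) (v : V), projChar ρ 1 (ρ (unip y) v) = projChar ρ 1 v := by
    intro y v
    rw [projChar_unip]
    simp
  apply LinearMap.ext
  intro v
  rw [LinearMap.zero_apply, ← Module.forall_dual_apply_eq_zero_iff ℂ]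
  intro ℓ'
  by_contra hcontra
  refine cuspidal_dual_eq_zero ρ hcusp (ℓ'.comp (projChar ρ 1)) ?_ ?_
  · intro x w
    simp only [LinearMap.comp_apply, hinv]
  · intro h
    apply hcontra
    have := congrArg (fun t : Module.Dual ℂ V => t v) h
    simpa using this

end Proj

/-- Every irreducible cuspidal representation of `GL₂(F_q)` has degree divisible
by `q - 1`. -/
theorem cuspidal_degree_dvd (F : Type) [Field F] [Fintype F] (V : Type)
    [AddCommGroup V] [Module ℂ V] [FiniteDimensional ℂ V]
    (ρ : Representation ℂ (GL (Fin 2) F) V) (hirr : IsIrrep ρ)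
    (hcusp : IsCuspidal ρ) :
    (Fintype.card F - 1) ∣ Module.finrank ℂ V := by
  classical
  obtain ⟨ψ₀, hψ₀⟩ : ∃ ψ : AddChar F ℂ, ψ 1 ≠ 1 :=
    (AddChar.exists_apply_ne_zero (a := (1 : F))).2 one_ne_zero
  have hψ₀ne : ψ₀ ≠ 0 := AddChar.ne_zero_iff.2 ⟨1, hψ₀⟩
  have hinj : Function.Injective (fun a : F => ψ₀.mulShift a) := by
    intro a b hab
    by_contra hne
    apply hψ₀ne
    simp only at hab
    have key : ∀ y : F, ψ₀ ((a - b) * y) = 1 := by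
      intro y
      have h0 := DFunLike.congr_fun hab y
      simp only [AddChar.mulShift_apply] at h0
      have h2 : (a - b) * y + b * y = a * y := by ring
      have hbz : ψ₀ (b * y) ≠ 0 := by
        intro hz
        have : ψ₀ (b * y) * ψ₀ (-(b * y)) = 1 := by
          rw [← AddChar.map_add_eq_mul, add_neg_cancel, AddChar.map_zero_eq_one]
        rw [hz, zero_mul] at this
        exact zero_ne_one this
      have h3 : ψ₀ ((a - b) * y) * ψ₀ (b * y) = ψ₀ (b * y) := by
        rw [← AddChar.map_add_eq_mul, h2, h0]
      exact mul_right_cancel₀ hbz (by rw [h3, one_mul])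
    ext z
    have h4 := key ((a - b)⁻¹ * z)
    rw [← mul_assoc, mul_inv_cancel₀ (sub_ne_zero.2 hne), one_mul] at h4
    simpa using h4
  have hbij : Function.Bijective (fun a : F => ψ₀.mulShift a) := by
    rw [Fintype.bijective_iff_injective_and_card]
    exact ⟨hinj, (AddChar.card_eq).symm⟩
  have hsum : (Module.finrank ℂ V : ℂ) = ∑ ψ : AddChar F ℂ, LinearMap.trace ℂ V (projChar ρ ψ) := by
    rw [← map_sum, sum_projChar, LinearMap.trace_id]
  have hre : ∑ ψ : AddChar F ℂ, LinearMap.trace ℂ V (projChar ρ ψ)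
      = ∑ a : F, LinearMap.trace ℂ V (projChar ρ (ψ₀.mulShift a)) :=
    (Fintype.sum_bijective _ hbij _ _ (fun a => rfl)).symm
  have hsplit : ∑ a : F, LinearMap.trace ℂ V (projChar ρ (ψ₀.mulShift a))
      = LinearMap.trace ℂ V (projChar ρ (ψ₀.mulShift 0))
        + ∑ a ∈ Finset.univ.erase 0, LinearMap.trace ℂ V (projChar ρ (ψ₀.mulShift a)) := by
    exact (Finset.add_sum_erase Finset.univ
      (fun a : F => LinearMap.trace ℂ V (projChar ρ (ψ₀.mulShift a))) (Finset.mem_univ 0)).symm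
  have hz : LinearMap.trace ℂ V (projChar ρ (ψ₀.mulShift 0)) = 0 := by
    rw [AddChar.mulShift_zero]
    have h1 := projChar_one_eq_zero ρ hcusp
    rw [h1, map_zero]
  have hcon : ∀ a ∈ Finset.univ.erase (0:F),
      LinearMap.trace ℂ V (projChar ρ (ψ₀.mulShift a)) = LinearMap.trace ℂ V (projChar ρ ψ₀) := by
    intro a ha
    have ha0 : a ≠ 0 := Finset.ne_of_mem_erase ha
    have := projChar_conj ρ ψ₀ (Units.mk0 a ha0)
    simpa using this
  set r := Module.finrank ℂ ↥(LinearMap.range (projChar ρ ψ₀)) with hr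
  have hproj : LinearMap.IsProj (LinearMap.range (projChar ρ ψ₀)) (projChar ρ ψ₀) := by
    refine ⟨fun v => LinearMap.mem_range_self _ v, ?_⟩
    rintro x ⟨y, rfl⟩
    exact projChar_idem ρ ψ₀ y
  have htr : LinearMap.trace ℂ V (projChar ρ ψ₀) = (r : ℂ) := hproj.trace
  have hcount : (Finset.univ.erase (0:F)).card = Fintype.card F - 1 := by
    rw [Finset.card_erase_of_mem (Finset.mem_univ 0), Finset.card_univ]
  have hfinal : (Module.finrank ℂ V : ℂ) = (((Fintype.card F - 1) * r : ℕ) : ℂ) := by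
    rw [hsum, hre, hsplit, hz, zero_add, Finset.sum_congr rfl hcon, Finset.sum_const, hcount, htr,
      nsmul_eq_mul]
    norm_cast
  have hnat : Module.finrank ℂ V = (Fintype.card F - 1) * r := Nat.cast_injective hfinal
  exact ⟨r, hnat⟩
end
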